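/- arXiv:2604.23322 — 6 statements merged into one kernel-verified Lean document; each statement's English description precedes it below -/
import Mathlib

section
/- Let k be an algebraically closed field and let A = k·1 ⊕ J be a local commutative k-algebra of dimension 5 with dim_k J = 4 and J² = 0. Let V = k^6 be a faithful A-module. Then dim_k End_A(V) ≥ 6. In particular, the image of A in M_6(k) under the action on V is not a maximal commutative subalgebra. -/
set_option maxHeartbeats 1000000
set_option synthInstance.maxHeartbeats 200000


/-- The image of a `k`-algebra `A` acting on `k⁶` inside the matrix algebra `M₆(k)`. -/
noncomputable def matrixImageOfAction (k A : Type*) [Field k] [CommRing A] [Algebra k A]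
    [Module A (Fin 6 → k)] [IsScalarTower k A (Fin 6 → k)]
    [SMulCommClass A k (Fin 6 → k)] :
    Subalgebra k (Matrix (Fin 6) (Fin 6) k) :=
  ((LinearMap.toMatrixAlgEquiv' :
      Module.End k (Fin 6 → k) ≃ₐ[k] Matrix (Fin 6) (Fin 6) k).toAlgHom.comp
    (Algebra.lsmul k k (Fin 6 → k) : A →ₐ[k] Module.End k (Fin 6 → k))).range

/-- Let `k` be an algebraically closed field and `A = k·1 ⊕ J` a local commutative
`k`-algebra of dimension `5` with `dim J = 4` and `J² = 0`.  Let `V = k⁶` be a faithful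
`A`-module.  Then `dim_k End_A(V) ≥ 6`; in particular the image of `A` in `M₆(k)` is not
a maximal commutative subalgebra. -/
theorem type_1_4_endomorphisms_and_not_maximal
    (k : Type*) [Field k] [IsAlgClosed k]
    (A : Type*) [CommRing A] [Algebra k A] [IsLocalRing A]
    (hsplit : ∀ a : A, ∃ (c : k) (x : A),
      x ∈ IsLocalRing.maximalIdeal A ∧ a = algebraMap k A c + x)
    (hdimA : Module.finrank k A = 5)
    (hdimJ : Module.finrank k ((IsLocalRing.maximalIdeal A).restrictScalars k) = 4)
    (hJ2 : (IsLocalRing.maximalIdeal A) ^ 2 = ⊥)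
    [Module A (Fin 6 → k)] [IsScalarTower k A (Fin 6 → k)]
    [SMulCommClass A k (Fin 6 → k)]
    (hfaith : ∀ a : A, (∀ v : Fin 6 → k, a • v = 0) → a = 0) :
    6 ≤ Module.finrank k ((Fin 6 → k) →ₗ[A] (Fin 6 → k)) ∧
    matrixImageOfAction k A ≠
      Subalgebra.centralizer k
        (matrixImageOfAction k A : Set (Matrix (Fin 6) (Fin 6) k)) := by
  classical
  set V := (Fin 6 → k) with hVdef
  set J := IsLocalRing.maximalIdeal A with hJdef
  have hfinA : Module.Finite k A := Module.finite_of_finrank_pos (by rw [hdimA]; norm_num)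
  haveI : FiniteDimensional k V := inferInstanceAs (FiniteDimensional k (Fin 6 → k))
  have hVrank : Module.finrank k V = 6 := by
    show Module.finrank k (Fin 6 → k) = 6
    simp [Module.finrank_pi]
  -- a nonzero element of J
  obtain ⟨x0, hx0J, hx0⟩ : ∃ x ∈ J, x ≠ 0 := by
    by_contra h
    push_neg at h
    have hbot : J.restrictScalars k = ⊥ := by
      rw [eq_bot_iff]
      intro y hy
      simpa using h y hy
    rw [hbot] at hdimJ
    simp [finrank_bot] at hdimJ
  have hmul0 : ∀ x ∈ J, ∀ y ∈ J, x * y = 0 := by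
    intro x hx y hy
    have h2 : x * y ∈ J ^ 2 := by rw [pow_two]; exact Ideal.mul_mem_mul hx hy
    rwa [hJ2, Ideal.mem_bot] at h2
  -- W = J•V, ann = annihilator of J in V
  set W : Submodule k V := Submodule.span k {w : V | ∃ x ∈ J, ∃ v : V, x • v = w} with hWdef
  have hmemW : ∀ x ∈ J, ∀ v : V, x • v ∈ W := fun x hx v =>
    Submodule.subset_span ⟨x, hx, v, rfl⟩
  set ann : Submodule k V :=
    { carrier := {v : V | ∀ x ∈ J, x • v = 0}
      add_mem' := fun {v} {w} hv hw => by
        intro x hx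
        rw [smul_add, hv x hx, hw x hx, add_zero]
      zero_mem' := fun x _ => smul_zero x
      smul_mem' := fun c v hv => by
        intro x hx
        rw [smul_comm, hv x hx, smul_zero] } with hanndef
  have hWann : W ≤ ann := by
    rw [hWdef, Submodule.span_le]
    rintro _ ⟨x, hx, v, rfl⟩ y hy
    rw [← mul_smul, hmul0 y hy x hx, zero_smul]
  obtain ⟨v0, hv0⟩ : ∃ v : V, x0 • v ≠ 0 := by
    by_contra h
    push_neg at h
    exact hx0 (hfaith x0 h)
  have hw0 : x0 • v0 ∈ W := hmemW x0 hx0J v0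
  set d := Module.finrank k W with hddef
  set e := Module.finrank k ann with hedef
  have hde : d ≤ e := Submodule.finrank_mono hWann
  have hd1 : 1 ≤ d := by
    have : Nontrivial W := ⟨⟨⟨x0 • v0, hw0⟩, 0, by simpa using hv0⟩⟩
    have := Module.finrank_pos (R := k) (M := W)
    omega
  have hd5 : d ≤ 5 := by
    have hWlt : W < ⊤ := by
      rcases lt_or_eq_of_le (le_top : W ≤ ⊤) with h | h
      · exact h
      · exfalso
        have hannT : ann = ⊤ := top_le_iff.mp (h ▸ hWann)
        refine hx0 (hfaith x0 fun v => ?_)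
        have hv : v ∈ ann := hannT ▸ Submodule.mem_top
        exact hv x0 hx0J
    have := Submodule.finrank_lt (K := k) (V := V) hWlt.ne
    omega
  have hQd : Module.finrank k (V ⧸ W) = 6 - d := by
    have := Submodule.finrank_quotient_add_finrank W
    omega
  -- the key A-linearity computation
  have hAlin : ∀ (g : (V ⧸ W) →ₗ[k] ann) (c : k) (a : A) (v : V),
      (g (W.mkQ (a • v)) : V) + c • (a • v)
        = a • ((g (W.mkQ v) : V) + c • v) := by
    intro g c a v
    obtain ⟨s, x, hx, rfl⟩ := hsplit a
    have h1 : (algebraMap k A s + x) • v = s • v + x • v := by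
      rw [add_smul, algebraMap_smul]
    have hxv0 : W.mkQ (x • v) = 0 := (Submodule.Quotient.mk_eq_zero W).2 (hmemW x hx v)
    have hgl : (g (W.mkQ ((algebraMap k A s + x) • v)) : V) = s • (g (W.mkQ v) : V) := by
      rw [h1, map_add, hxv0, add_zero, map_smul, map_smul, Submodule.coe_smul]
    have hann0 : x • ((g (W.mkQ v) : V)) = 0 := (g (W.mkQ v)).2 x hx
    have hau : (algebraMap k A s + x) • (g (W.mkQ v) : V) = s • (g (W.mkQ v) : V) := by
      rw [add_smul, algebraMap_smul, hann0, add_zero]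
    have hacv : (algebraMap k A s + x) • (c • v) = c • ((algebraMap k A s + x) • v) :=
      smul_comm _ _ _
    rw [hgl, smul_add, hau, hacv]
  set Φ : (((V ⧸ W) →ₗ[k] ann) × k) →ₗ[k] (V →ₗ[A] V) :=
    { toFun := fun p =>
        { toFun := fun v => (p.1 (W.mkQ v) : V) + p.2 • v
          map_add' := by
            intro v w
            show (p.1 (W.mkQ (v + w)) : V) + p.2 • (v + w)
              = ((p.1 (W.mkQ v) : V) + p.2 • v) + ((p.1 (W.mkQ w) : V) + p.2 • w)
            rw [map_add, map_add, Submodule.coe_add, smul_add]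
            abel
          map_smul' := fun a v => hAlin p.1 p.2 a v }
      map_add' := by
        intro p q
        refine LinearMap.ext fun v => ?_
        show ((p.1 + q.1) (W.mkQ v) : V) + (p.2 + q.2) • v
          = ((p.1 (W.mkQ v) : V) + p.2 • v) + ((q.1 (W.mkQ v) : V) + q.2 • v)
        rw [LinearMap.add_apply, Submodule.coe_add, add_smul]
        abel
      map_smul' := by
        intro c p
        refine LinearMap.ext fun v => ?_
        show ((c • p.1) (W.mkQ v) : V) + (c * p.2) • v
          = c • ((p.1 (W.mkQ v) : V) + p.2 • v)
        rw [LinearMap.smul_apply, Submodule.coe_smul, smul_add, mul_smul] } with hΦdef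
  have hΦapp : ∀ (p : ((V ⧸ W) →ₗ[k] ann) × k) (v : V),
      Φ p v = (p.1 (W.mkQ v) : V) + p.2 • v := fun p v => rfl
  have hΦker : ∀ p, Φ p = 0 → p = 0 := by
    intro p hp
    have h1 := LinearMap.congr_fun hp (x0 • v0)
    rw [hΦapp] at h1
    rw [show W.mkQ (x0 • v0) = 0 from (Submodule.Quotient.mk_eq_zero W).2 hw0,
      map_zero] at h1
    simp only [Submodule.coe_zero, zero_add, LinearMap.zero_apply] at h1
    have hp2 : p.2 = 0 := by
      rcases smul_eq_zero.mp h1 with h | h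
      · exact h
      · exact absurd h hv0
    have hp1 : p.1 = 0 := by
      refine LinearMap.ext fun q => ?_
      obtain ⟨v, rfl⟩ := Submodule.Quotient.mk_surjective W q
      have h2 := LinearMap.congr_fun hp v
      rw [hΦapp, hp2, zero_smul, add_zero] at h2
      simp only [LinearMap.zero_apply] at h2
      exact Subtype.ext (by simpa using h2)
    calc p = (p.1, p.2) := rfl
    _ = 0 := by rw [hp1, hp2]; rfl
  have hΦinj : Function.Injective Φ := by
    intro p q hpq
    have h0 : Φ (p - q) = 0 := by
      have hs := LinearMap.map_sub Φ p q
      rw [hpq, sub_self] at hs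
      exact hs
    exact sub_eq_zero.mp (hΦker _ h0)
  have hfinHom : Module.Finite k (V →ₗ[A] V) :=
    FiniteDimensional.of_injective (LinearMap.restrictScalarsₗ k A V V k)
      (LinearMap.restrictScalars_injective k)
  have hle := LinearMap.finrank_le_finrank_of_injective hΦinj
  haveI : Module.Free k ((V ⧸ W) →ₗ[k] ann) := inferInstance
  haveI : Module.Finite k ((V ⧸ W) →ₗ[k] ann) := inferInstance
  have hdom : Module.finrank k ((((V ⧸ W) →ₗ[k] ann) × k)) = (6 - d) * e + 1 := by
    rw [Module.finrank_prod, Module.finrank_self, Module.finrank_linearMap, hQd]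
  have h5 : 5 ≤ (6 - d) * e :=
    le_trans (by interval_cases d <;> omega) (Nat.mul_le_mul_left (6 - d) hde)
  have h6 : 6 ≤ Module.finrank k (V →ₗ[A] V) := by
    rw [hdom] at hle
    omega
  refine ⟨h6, fun hcontra => ?_⟩
  -- second part
  set φM : A →ₐ[k] Matrix (Fin 6) (Fin 6) k :=
    ((LinearMap.toMatrixAlgEquiv' :
        Module.End k V ≃ₐ[k] Matrix (Fin 6) (Fin 6) k).toAlgHom.comp
      (Algebra.lsmul k k V : A →ₐ[k] Module.End k V)) with hφMdef
  have hR : matrixImageOfAction k A = φM.range := rfl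
  set C := Subalgebra.centralizer k
      (matrixImageOfAction k A : Set (Matrix (Fin 6) (Fin 6) k)) with hCdef
  have hcent : ∀ f : V →ₗ[A] V,
      LinearMap.toMatrixAlgEquiv' (LinearMap.restrictScalars k f) ∈ C := by
    intro f
    rw [hCdef, Subalgebra.mem_centralizer_iff]
    intro g hg
    rw [hR] at hg
    obtain ⟨a, rfl⟩ := hg
    have hcomm : (Algebra.lsmul k k V a) * (LinearMap.restrictScalars k f)
        = (LinearMap.restrictScalars k f) * (Algebra.lsmul k k V a) := by
      refine LinearMap.ext fun v => ?_
      exact (f.map_smul a v).symm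
    show LinearMap.toMatrixAlgEquiv' (Algebra.lsmul k k V a)
          * LinearMap.toMatrixAlgEquiv' (LinearMap.restrictScalars k f)
        = LinearMap.toMatrixAlgEquiv' (LinearMap.restrictScalars k f)
          * LinearMap.toMatrixAlgEquiv' (Algebra.lsmul k k V a)
    rw [← map_mul, ← map_mul, hcomm]
  set L : (V →ₗ[A] V) →ₗ[k] Matrix (Fin 6) (Fin 6) k :=
    (LinearMap.toMatrixAlgEquiv' :
        Module.End k V ≃ₐ[k] Matrix (Fin 6) (Fin 6) k).toLinearMap.comp
      (LinearMap.restrictScalarsₗ k A V V k) with hLdef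
  have hLinj : Function.Injective L :=
    (LinearMap.toMatrixAlgEquiv'.injective).comp (LinearMap.restrictScalars_injective k)
  set Ψ : (V →ₗ[A] V) →ₗ[k] (Subalgebra.toSubmodule C) :=
    LinearMap.codRestrict (Subalgebra.toSubmodule C) L (fun f => hcent f) with hΨdef
  have hΨinj : Function.Injective Ψ := by
    intro a b hab
    apply hLinj
    exact congrArg Subtype.val hab
  have h6C : 6 ≤ Module.finrank k C := by
    have hh := LinearMap.finrank_le_finrank_of_injective hΨinj
    rw [Subalgebra.finrank_toSubmodule] at hh
    omega
  have hRsub : Subalgebra.toSubmodule φM.range = LinearMap.range φM.toLinearMap := by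
    ext m
    simp [LinearMap.mem_range, AlgHom.mem_range]
  have hRle : Module.finrank k (matrixImageOfAction k A) ≤ 5 := by
    rw [hR, ← Subalgebra.finrank_toSubmodule, hRsub]
    simpa [hdimA] using LinearMap.finrank_range_le φM.toLinearMap
  rw [hcontra] at hRle
  omega
end

section
/- Let k be an algebraically closed field and let A = k·1 ⊕ J be a local commutative k-algebra of dimension 5 with Hilbert–Samuel type (1,3,1), i.e. dim_k(J/J²) = 3, dim_k J² = 1, and J³ = 0. Let V = k^6 be a faithful A-module with dim_k(V/JV) = 3, dim_k(JV/J²V) = 2, dim_k(J²V) = 1. Then dim_k End_A(V) ≥ 6, and in particular the image of A in M_6(k) is not a maximal commutative subalgebra. -/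
open IsLocalRing Module


/-- The dimension of the subquotient `P / (P ∩ Q)` of two subspaces `P, Q ⊆ V`;
for `Q ⊆ P` this is the dimension of `P/Q`. -/
noncomputable def subquotientDim (k : Type*) [Field k] {V : Type*} [AddCommGroup V]
    [Module k V] (P Q : Submodule k V) : ℕ :=
  Module.finrank k (↥P ⧸ (Q.comap P.subtype))

section Aux

variable (k : Type*) [Field k]
variable (A : Type*) [CommRing A] [Algebra k A] [IsLocalRing A]
variable (V : Type*) [AddCommGroup V] [Module k V] [Module A V]
  [IsScalarTower k A V] [SMulCommClass A k V]

/-- The socle of `V`: vectors killed by the maximal ideal. -/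
def socV : Submodule k V where
  carrier := {v | ∀ j ∈ maximalIdeal A, j • v = 0}
  add_mem' := fun ha hb j hj => by rw [smul_add, ha j hj, hb j hj, add_zero]
  zero_mem' := fun j hj => smul_zero j
  smul_mem' := fun c v hv j hj => by rw [smul_comm, hv j hj, smul_zero]

/-- The annihilator of the maximal ideal, as a `k`-subspace of `A`. -/
def annJ : Submodule k A where
  carrier := {u | ∀ j ∈ maximalIdeal A, u * j = 0}
  add_mem' := fun ha hb j hj => by rw [add_mul, ha j hj, hb j hj, add_zero]
  zero_mem' := fun j hj => zero_mul j
  smul_mem' := fun c u hu j hj => by rw [smul_mul_assoc, hu j hj, smul_zero]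

/-- The `k`-subspace of `A`-linear endomorphisms inside `End_k(V)`. -/
def aLinear : Submodule k (V →ₗ[k] V) where
  carrier := {f | ∀ (a : A) (v : V), f (a • v) = a • f v}
  add_mem' := fun hf hg a v => by
    simp only [LinearMap.add_apply, hf a v, hg a v, smul_add]
  zero_mem' := fun a v => by simp
  smul_mem' := fun c f hf a v => by
    rw [LinearMap.smul_apply, LinearMap.smul_apply, hf a v, smul_comm]

/-- `A`-endomorphisms of `V` are `k`-linearly equivalent to `aLinear`. -/
noncomputable def endEquiv : (V →ₗ[A] V) ≃ₗ[k] aLinear k A V where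
  toFun f := ⟨{ toFun := f
                map_add' := f.map_add
                map_smul' := fun c v => by
                  have : f (c • v) = c • f v := by
                    rw [← algebraMap_smul A c v, map_smul, algebraMap_smul]
                  exact this },
              fun a v => f.map_smul a v⟩
  invFun g := { toFun := g.1
                map_add' := g.1.map_add
                map_smul' := fun a v => g.2 a v }
  map_add' f g := rfl
  map_smul' c f := rfl
  left_inv f := rfl
  right_inv g := rfl

end Aux

section Aux2

variable {k : Type*} [Field k]
variable {A : Type*} [CommRing A] [Algebra k A] [IsLocalRing A]
variable {V : Type*} [AddCommGroup V] [Module k V] [Module A V]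
  [IsScalarTower k A V] [SMulCommClass A k V]

theorem mem_socV {v : V} : v ∈ socV k A V ↔ ∀ j ∈ maximalIdeal A, j • v = 0 := Iff.rfl

theorem mem_annJ {u : A} : u ∈ annJ k A ↔ ∀ j ∈ maximalIdeal A, u * j = 0 := Iff.rfl

end Aux2

section Aux3

variable (k : Type*) [Field k]
variable (A : Type*) [CommRing A] [Algebra k A] [IsLocalRing A]
variable (V : Type*) [AddCommGroup V] [Module k V] [Module A V]
  [IsScalarTower k A V] [SMulCommClass A k V]

/-- The subspace of endomorphisms killing `JV` with image in the socle. -/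
def qSub : Submodule k (V →ₗ[k] V) where
  carrier := {f | (∀ v ∈ (maximalIdeal A • (⊤ : Submodule A V)).restrictScalars k, f v = 0)
    ∧ ∀ v : V, f v ∈ socV k A V}
  add_mem' := fun hf hg => ⟨fun v hv => by
      rw [LinearMap.add_apply, hf.1 v hv, hg.1 v hv, add_zero],
    fun v => add_mem (hf.2 v) (hg.2 v)⟩
  zero_mem' := ⟨fun v _ => rfl, fun v => (socV k A V).zero_mem⟩
  smul_mem' := fun c f hf => ⟨fun v hv => by rw [LinearMap.smul_apply, hf.1 v hv, smul_zero],
    fun v => Submodule.smul_mem _ c (hf.2 v)⟩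

theorem mem_qSub {f : V →ₗ[k] V} : f ∈ qSub k A V ↔
    (∀ v ∈ (maximalIdeal A • (⊤ : Submodule A V)).restrictScalars k, f v = 0)
    ∧ ∀ v : V, f v ∈ socV k A V := Iff.rfl

set_option maxHeartbeats 2000000 in
theorem aux_main
    (hsplit : ∀ a : A, ∃ (c : k) (x : A), x ∈ maximalIdeal A ∧ a = algebraMap k A c + x)
    (hdimA : finrank k A = 5)
    (hJ2 : finrank k (((maximalIdeal A) ^ 2).restrictScalars k) = 1)
    (hJ3 : (maximalIdeal A) ^ 3 = ⊥)
    [FiniteDimensional k V]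
    (hdimV : finrank k V = 6)
    (hfaith : ∀ a : A, (∀ v : V, a • v = 0) → a = 0)
    (hVJV : finrank k (V ⧸ (maximalIdeal A • (⊤ : Submodule A V)).restrictScalars k) = 3)
    (hJ2V : finrank k (((maximalIdeal A) ^ 2 • (⊤ : Submodule A V)).restrictScalars k) = 1) :
    6 ≤ finrank k (aLinear k A V) ∧
      LinearMap.range (AlgHom.toLinearMap
        (Algebra.lsmul k k V : A →ₐ[k] Module.End k V)) ≠ aLinear k A V := by
  haveI : FiniteDimensional k A := FiniteDimensional.of_finrank_pos (by rw [hdimA]; norm_num)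
  set J := maximalIdeal A with hJdef
  set Jk : Submodule k A := J.restrictScalars k with hJkdef
  set JV : Submodule k V := (J • (⊤ : Submodule A V)).restrictScalars k with hJVdef
  set Soc := socV k A V with hSocdef
  set N := annJ k A with hNdef
  -- dim Jk = 4
  have hsup1 : (k ∙ (1:A)) ⊔ Jk = ⊤ := by
    rw [eq_top_iff]; intro a _
    obtain ⟨c, x, hx, rfl⟩ := hsplit a
    refine Submodule.add_mem_sup ?_ hx
    rw [Algebra.algebraMap_eq_smul_one]
    exact Submodule.smul_mem _ c (Submodule.mem_span_singleton_self 1)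
  have hinf1 : (k ∙ (1:A)) ⊓ Jk = ⊥ := by
    rw [eq_bot_iff]; rintro a ⟨h1, h2⟩
    obtain ⟨c, rfl⟩ := Submodule.mem_span_singleton.mp h1
    rcases eq_or_ne c 0 with hc | hc
    · simp [hc]
    · exfalso
      have hu : IsUnit (c • (1:A)) := by
        rw [← Algebra.algebraMap_eq_smul_one]
        exact (isUnit_iff_ne_zero.mpr hc).map (algebraMap k A)
      exact (mem_maximalIdeal _).mp h2 hu
  have hJk4 : finrank k Jk = 4 := by
    have hd := Submodule.finrank_sup_add_finrank_inf_eq (k ∙ (1:A)) Jk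
    rw [hsup1, hinf1, finrank_top, hdimA, finrank_bot,
      finrank_span_singleton (one_ne_zero : (1:A) ≠ 0)] at hd
    omega
  -- annJ ≤ Jk
  have hNJk : N ≤ Jk := by
    intro u hu
    obtain ⟨c, x, hx, rfl⟩ := hsplit u
    rcases eq_or_ne c 0 with hc | hc
    · simpa [hc] using (show x ∈ Jk from hx)
    · exfalso
      have hle : Jk ≤ (J ^ 2).restrictScalars k := by
        intro m hm
        have h0 : algebraMap k A c * m + x * m = 0 := by
          rw [← add_mul]; exact hu m hm
        have h1 : c • m = -(x * m) := by
          rw [Algebra.smul_def]; exact eq_neg_of_add_eq_zero_left h0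
        have hm2 : m = c⁻¹ • (c • m) := by
          rw [smul_smul, inv_mul_cancel₀ hc, one_smul]
        rw [hm2, h1]
        refine Submodule.smul_mem _ _ (neg_mem ?_)
        rw [Submodule.restrictScalars_mem, pow_two]
        exact Ideal.mul_mem_mul hx hm
      have hmono := Submodule.finrank_mono hle
      rw [hJk4, hJ2] at hmono
      omega
  -- J²V ≤ Soc
  have hJ2VSoc : ((J ^ 2) • (⊤ : Submodule A V)).restrictScalars k ≤ Soc := by
    intro v hv
    rw [hSocdef, mem_socV]
    intro j hj
    rw [Submodule.restrictScalars_mem] at hv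
    refine Submodule.smul_induction_on hv ?_ ?_
    · intro r hr n _
      rw [smul_smul]
      have hmem : j * r ∈ (J : Ideal A) ^ 3 := by
        rw [mul_comm, pow_succ]
        exact Ideal.mul_mem_mul hr hj
      rw [hJ3] at hmem
      rw [(Submodule.mem_bot A).mp hmem, zero_smul]
    · intro a b ha hb; rw [smul_add, ha, hb, add_zero]
  have hSoc1 : 1 ≤ finrank k Soc := by
    have hm := Submodule.finrank_mono hJ2VSoc
    rw [hJ2V] at hm
    omega
  -- finrank JV = 3
  have hJV3 : finrank k JV = 3 := by
    have hq := Submodule.finrank_quotient_add_finrank JV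
    rw [hVJV, hdimV] at hq
    omega
  -- key inequality
  have hkey : finrank k N + 1 ≤ 3 * finrank k Soc := by
    have ha4 : finrank k N ≤ 4 := hJk4 ▸ Submodule.finrank_mono hNJk
    by_cases ht : 2 ≤ finrank k Soc
    · omega
    · have ht1 : finrank k Soc = 1 := by omega
      by_contra hcon
      push_neg at hcon
      have ha3' : 3 ≤ finrank k N := by omega
      have hne : N ≠ Jk := by
        intro he
        have hb : (J ^ 2 : Ideal A) = ⊥ := by
          rw [pow_two, eq_bot_iff]
          refine Ideal.mul_le.mpr ?_
          intro r hr s hs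
          have hrN : r ∈ N := he ▸ (show r ∈ Jk from hr)
          rw [Submodule.mem_bot]
          exact (mem_annJ.mp hrN) s hs
        rw [hb] at hJ2
        rw [show ((⊥ : Ideal A).restrictScalars k) = (⊥ : Submodule k A) from rfl,
          finrank_bot] at hJ2
        omega
      have ha3 : finrank k N = 3 := by
        have h4 : finrank k N ≠ 4 := fun h4 =>
          hne (Submodule.eq_of_le_of_finrank_le hNJk (by rw [hJk4, h4]))
        omega
      have hlt : N < Jk := lt_of_le_of_ne hNJk hne
      obtain ⟨x, hxJk, hxN⟩ := SetLike.exists_of_lt hlt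
      have hxJ : x ∈ J := hxJk
      have hinf2 : N ⊓ (k ∙ x) = ⊥ := by
        rw [eq_bot_iff]; rintro y ⟨hyN, hyS⟩
        obtain ⟨c, rfl⟩ := Submodule.mem_span_singleton.mp hyS
        rcases eq_or_ne c 0 with hc | hc
        · simp [hc]
        · exact absurd (by simpa [smul_smul, inv_mul_cancel₀ hc] using N.smul_mem c⁻¹ hyN) hxN
      have hsupN : N ⊔ (k ∙ x) = Jk := by
        refine Submodule.eq_of_le_of_finrank_le
          (sup_le hNJk (Submodule.span_le.mpr (by simpa using hxJk))) ?_
        have hd := Submodule.finrank_sup_add_finrank_inf_eq N (k ∙ x)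
        rw [hinf2, finrank_bot, ha3, finrank_span_singleton
          (fun h0 => hxN (by rw [h0]; exact N.zero_mem))] at hd
        omega
      have hmemφ : ∀ v ∈ JV, x • v ∈ ((J ^ 2) • (⊤ : Submodule A V)).restrictScalars k := by
        intro v hv
        rw [Submodule.restrictScalars_mem] at hv ⊢
        refine Submodule.smul_induction_on hv ?_ ?_
        · intro r hr n _
          rw [smul_smul]
          refine Submodule.smul_mem_smul ?_ Submodule.mem_top
          rw [pow_two]; exact Ideal.mul_mem_mul hxJ hr
        · intro a b ha hb; rw [smul_add]; exact add_mem ha hb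
      set φ : JV →ₗ[k] (((J ^ 2) • (⊤ : Submodule A V)).restrictScalars k) :=
        { toFun := fun v => ⟨x • (v : V), hmemφ v v.2⟩
          map_add' := fun a b => Subtype.ext (by simp [smul_add])
          map_smul' := fun c v => Subtype.ext (by simp [smul_comm x c]) } with hφdef
      have hrn := LinearMap.finrank_range_add_finrank_ker φ
      have hrle : finrank k (LinearMap.range φ) ≤ 1 := by
        have h1 := Submodule.finrank_le (LinearMap.range φ)
        rw [hJ2V] at h1
        exact h1
      have hker2 : 2 ≤ finrank k (LinearMap.ker φ) := by
        rw [hJV3] at hrn; omega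
      have hmapSoc : (LinearMap.ker φ).map JV.subtype ≤ Soc := by
        rintro v ⟨w, hw, rfl⟩
        simp only [Submodule.subtype_apply]
        rw [hSocdef, mem_socV]
        intro j hj
        have hxw : x • (w : V) = 0 :=
          congrArg Subtype.val (LinearMap.mem_ker.mp hw)
        have hjk : (j : A) ∈ N ⊔ (k ∙ x) := by
          rw [hsupN]; exact hj
        obtain ⟨u, huN, s, hsS, hjsum⟩ := Submodule.mem_sup.mp hjk
        obtain ⟨c, rfl⟩ := Submodule.mem_span_singleton.mp hsS
        have hu0 : u • (w : V) = 0 := by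
          have hwJV : (w : V) ∈ J • (⊤ : Submodule A V) := w.2
          refine Submodule.smul_induction_on hwJV ?_ ?_
          · intro r hr n _
            rw [smul_smul, (mem_annJ.mp huN) r hr, zero_smul]
          · intro a b ha hb; rw [smul_add, ha, hb, add_zero]
        rw [← hjsum, add_smul, hu0, zero_add, smul_assoc, hxw, smul_zero]
      have hfr : finrank k ((LinearMap.ker φ).map JV.subtype) = finrank k (LinearMap.ker φ) :=
        ((Submodule.equivMapOfInjective JV.subtype (Submodule.injective_subtype JV)
          (LinearMap.ker φ)).finrank_eq).symm
      have h2 := Submodule.finrank_mono hmapSoc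
      rw [hfr] at h2
      omega
  -- Now assemble
  set μ : A →ₗ[k] (V →ₗ[k] V) :=
    AlgHom.toLinearMap (Algebra.lsmul k k V : A →ₐ[k] Module.End k V) with hμdef
  have hμapp : ∀ (a : A) (v : V), μ a v = a • v := fun a v => rfl
  have hμinj : Function.Injective μ := by
    rw [← LinearMap.ker_eq_bot, eq_bot_iff]
    intro a ha
    rw [LinearMap.mem_ker] at ha
    rw [Submodule.mem_bot]
    refine hfaith a fun v => ?_
    rw [← hμapp a v, ha, LinearMap.zero_apply]
  set P := LinearMap.range μ with hPdef
  have hP5 : finrank k P = 5 := by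
    rw [hPdef, LinearMap.finrank_range_of_inj hμinj, hdimA]
  have hPC : P ≤ aLinear k A V := by
    rintro f ⟨a, rfl⟩
    intro b v
    rw [hμapp, hμapp, smul_smul, smul_smul, mul_comm]
  have hQC : qSub k A V ≤ aLinear k A V := by
    intro f hf a v
    obtain ⟨c, x, hx, rfl⟩ := hsplit a
    have hxv : x • v ∈ JV := by
      rw [hJVdef, Submodule.restrictScalars_mem]
      exact Submodule.smul_mem_smul hx Submodule.mem_top
    have h1 : (algebraMap k A c + x) • v = c • v + x • v := by
      rw [add_smul, algebraMap_smul]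
    rw [h1, f.map_add, f.map_smul, hf.1 (x • v) hxv, add_zero, add_smul, algebraMap_smul,
      (mem_socV.mp (hf.2 v)) x hx, add_zero]
  have hPQ : P ⊓ qSub k A V = N.map μ := by
    apply le_antisymm
    · rintro f ⟨⟨a, rfl⟩, hfQ⟩
      refine ⟨a, ?_, rfl⟩
      intro j hj
      refine hfaith (a * j) fun v => ?_
      have hmem : j • v ∈ JV := by
        rw [hJVdef, Submodule.restrictScalars_mem]
        exact Submodule.smul_mem_smul hj Submodule.mem_top
      have h0 := hfQ.1 (j • v) hmem
      rw [hμapp] at h0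
      rw [← smul_smul]
      exact h0
    · rintro f ⟨u, huN, rfl⟩
      rw [Submodule.mem_inf]
      refine ⟨⟨u, rfl⟩, ?_, ?_⟩
      · intro v hv
        rw [hμapp]
        rw [Submodule.restrictScalars_mem] at hv
        refine Submodule.smul_induction_on hv ?_ ?_
        · intro r hr n _
          rw [smul_smul, (mem_annJ.mp huN) r hr, zero_smul]
        · intro a b ha hb; rw [smul_add, ha, hb, add_zero]
      · intro v
        rw [hμapp, mem_socV]
        intro j hj
        rw [smul_smul, mul_comm, (mem_annJ.mp huN) j hj, zero_smul]
  have hPQfin : finrank k ↥(P ⊓ qSub k A V) = finrank k N := by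
    rw [hPQ]
    exact ((Submodule.equivMapOfInjective μ hμinj N).finrank_eq).symm
  have hQ3t : 3 * finrank k Soc ≤ finrank k (qSub k A V) := by
    set Ψ : ((V ⧸ JV) →ₗ[k] Soc) →ₗ[k] (V →ₗ[k] V) :=
      { toFun := fun g => Soc.subtype ∘ₗ (g ∘ₗ JV.mkQ)
        map_add' := fun g h => by ext v; simp
        map_smul' := fun c g => by ext v; simp } with hΨdef
    have hΨinj : Function.Injective Ψ := by
      intro g h hgh
      refine LinearMap.ext fun w => ?_
      obtain ⟨v, rfl⟩ := Submodule.mkQ_surjective JV w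
      have h1 : Ψ g v = Ψ h v := by rw [hgh]
      exact Subtype.val_injective h1
    have hΨQ : LinearMap.range Ψ ≤ qSub k A V := by
      rintro f ⟨g, rfl⟩
      refine ⟨fun v hv => ?_, fun v => ?_⟩
      · show Soc.subtype (g (JV.mkQ v)) = 0
        rw [Submodule.mkQ_apply, (Submodule.Quotient.mk_eq_zero JV).mpr hv, map_zero, map_zero]
      · exact (g (JV.mkQ v)).2
    have he := LinearMap.finrank_range_of_inj hΨinj
    have h2 := Submodule.finrank_mono hΨQ
    rw [he, Module.finrank_linearMap, hVJV] at h2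
    exact h2
  have hdim := Submodule.finrank_sup_add_finrank_inf_eq P (qSub k A V)
  have hCC := Submodule.finrank_mono (sup_le hPC hQC)
  rw [hPQfin, hP5] at hdim
  constructor
  · omega
  · intro he
    have h6 : 6 ≤ finrank k (aLinear k A V) := by omega
    rw [← he, hP5] at h6
    omega

end Aux3

set_option maxHeartbeats 1000000 in
/-- Let `k` be an algebraically closed field and `A = k·1 ⊕ J` a local commutative
`k`-algebra of dimension `5` with Hilbert–Samuel type `(1,3,1)`, i.e.
`dim (J/J²) = 3`, `dim J² = 1`, `J³ = 0`.  Let `V = k⁶` be a faithful `A`-module with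
`dim (V/JV) = 3`, `dim (JV/J²V) = 2`, `dim J²V = 1`.  Then `dim_k End_A(V) ≥ 6`;
in particular the image of `A` in `M₆(k)` is not a maximal commutative subalgebra. -/
theorem type_1_3_1_filtration_3_2_1_endomorphisms_and_not_maximal
    (k : Type*) [Field k] [IsAlgClosed k]
    (A : Type*) [CommRing A] [Algebra k A] [IsLocalRing A]
    (hsplit : ∀ a : A, ∃ (c : k) (x : A),
      x ∈ IsLocalRing.maximalIdeal A ∧ a = algebraMap k A c + x)
    (hdimA : Module.finrank k A = 5)
    (hJJ2 : subquotientDim k ((IsLocalRing.maximalIdeal A).restrictScalars k)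
      (((IsLocalRing.maximalIdeal A) ^ 2).restrictScalars k) = 3)
    (hJ2 : Module.finrank k (((IsLocalRing.maximalIdeal A) ^ 2).restrictScalars k) = 1)
    (hJ3 : (IsLocalRing.maximalIdeal A) ^ 3 = ⊥)
    [Module A (Fin 6 → k)] [IsScalarTower k A (Fin 6 → k)]
    [SMulCommClass A k (Fin 6 → k)]
    (hfaith : ∀ a : A, (∀ v : Fin 6 → k, a • v = 0) → a = 0)
    (hVJV : Module.finrank k ((Fin 6 → k) ⧸
      (IsLocalRing.maximalIdeal A • (⊤ : Submodule A (Fin 6 → k))).restrictScalars k) = 3)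
    (hJVJ2V : subquotientDim k
      ((IsLocalRing.maximalIdeal A • (⊤ : Submodule A (Fin 6 → k))).restrictScalars k)
      (((IsLocalRing.maximalIdeal A) ^ 2 • (⊤ : Submodule A (Fin 6 → k))).restrictScalars k)
      = 2)
    (hJ2V : Module.finrank k
      (((IsLocalRing.maximalIdeal A) ^ 2 • (⊤ : Submodule A (Fin 6 → k))).restrictScalars k)
      = 1) :
    6 ≤ Module.finrank k ((Fin 6 → k) →ₗ[A] (Fin 6 → k)) ∧
    matrixImageOfAction k A ≠
      Subalgebra.centralizer k
        (matrixImageOfAction k A : Set (Matrix (Fin 6) (Fin 6) k)) := by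
  have hdimV : finrank k (Fin 6 → k) = 6 := by
    rw [Module.finrank_pi]; simp
  obtain ⟨h6, hne⟩ := aux_main k A (Fin 6 → k) hsplit hdimA hJ2 hJ3 hdimV hfaith hVJV hJ2V
  constructor
  · have heq := LinearEquiv.finrank_eq (R := k)
      (M := (Fin 6 → k) →ₗ[A] (Fin 6 → k)) (N := aLinear k A (Fin 6 → k))
      (endEquiv k A (Fin 6 → k))
    omega
  · intro h
    set Φ := (LinearMap.toMatrixAlgEquiv' :
      Module.End k (Fin 6 → k) ≃ₐ[k] Matrix (Fin 6) (Fin 6) k) with hΦdef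
    have hmemP : ∀ f : Module.End k (Fin 6 → k),
        f ∈ LinearMap.range (AlgHom.toLinearMap
          (Algebra.lsmul k k (Fin 6 → k) : A →ₐ[k] Module.End k (Fin 6 → k)))
          ↔ Φ f ∈ matrixImageOfAction k A := by
      intro f
      constructor
      · rintro ⟨a, rfl⟩
        exact ⟨a, rfl⟩
      · rintro ⟨a, ha⟩
        exact ⟨a, Φ.injective ha⟩
    have hmemC : ∀ f : Module.End k (Fin 6 → k),
        f ∈ aLinear k A (Fin 6 → k) ↔
          Φ f ∈ Subalgebra.centralizer k
            (matrixImageOfAction k A : Set (Matrix (Fin 6) (Fin 6) k)) := by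
      intro f
      rw [Subalgebra.mem_centralizer_iff]
      constructor
      · intro hf m hm
        obtain ⟨a, rfl⟩ := hm
        show Φ (Algebra.lsmul k k (Fin 6 → k) a) * Φ f = Φ f * Φ (Algebra.lsmul k k (Fin 6 → k) a)
        rw [← map_mul, ← map_mul]
        congr 1
        refine LinearMap.ext fun v => ?_
        rw [Module.End.mul_apply, Module.End.mul_apply]
        exact (hf a v).symm
      · intro hc a v
        have hm : Φ (Algebra.lsmul k k (Fin 6 → k) a) ∈ matrixImageOfAction k A := ⟨a, rfl⟩
        have h1 := hc _ hm
        rw [← map_mul, ← map_mul] at h1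
        have h2 := Φ.injective h1
        have h3 := LinearMap.ext_iff.mp h2 v
        rw [Module.End.mul_apply, Module.End.mul_apply] at h3
        exact h3.symm
    apply hne
    refine Submodule.ext fun f => ?_
    rw [hmemP f, hmemC f]
    nth_rewrite 1 [h]
    exact Iff.rfl
end

section
/- Let k be an algebraically closed field and let A = k·1 ⊕ J be a local commutative k-algebra of dimension 5 with Hilbert–Samuel type (1,2,1,1), i.e. dim_k(J/J²) = 2, dim_k(J²/J³) = 1, dim_k(J³) = 1, and J⁴ = 0. Let V be a faithful A-module with dim_k V = 6. Then dim_k End_A(V) ≥ 6, and in particular the image of A in M_6(k) is not a maximal commutative subalgebra. -/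
open Submodule Module

/-- Nakayama-type generation: if `M` is generated by `v` modulo `J•M` and `J^4 = 0`,
then `M = A•v`. -/
lemma aux_cyclic {k A : Type*} [Field k] [CommRing A] [Algebra k A]
    (J : Ideal A) (hJ4 : J ^ 4 = ⊥)
    {M : Type*} [AddCommGroup M] [Module A M] [Module k M] [IsScalarTower k A M]
    (v : M) (h : ∀ w : M, ∃ c : k, w - c • v ∈ (J • ⊤ : Submodule A M)) :
    ∀ w : M, ∃ a : A, a • v = w := by
  have hbase : (⊤ : Submodule A M) ≤ (A ∙ v) ⊔ J • ⊤ := by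
    intro w _
    obtain ⟨c, hc⟩ := h w
    have : w = c • v + (w - c • v) := by abel
    rw [this]
    exact add_mem_sup (by
      rw [← algebraMap_smul A c v]
      exact smul_mem _ _ (mem_span_singleton_self v)) hc
  have key : ∀ n : ℕ, (⊤ : Submodule A M) ≤ (A ∙ v) ⊔ J ^ n • ⊤ := by
    intro n
    induction n with
    | zero => simp only [pow_zero, Ideal.one_eq_top, top_smul]; exact hbase.trans (sup_le_sup_left smul_le_right _)
    | succ n ih =>
      refine le_trans ih (sup_le le_sup_left ?_)
      have : (J ^ n • ⊤ : Submodule A M) ≤ J ^ n • ((A ∙ v) ⊔ J • ⊤) :=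
        smul_mono_right _ hbase
      refine this.trans ?_
      rw [smul_sup]
      refine sup_le (le_trans smul_le_right le_sup_left) ?_
      rw [← Submodule.smul_assoc]
      have : (J ^ n • J : Ideal A) = J ^ (n + 1) := by
        rw [smul_eq_mul, pow_succ]
      rw [this]
      exact le_sup_right
  have := key 4
  rw [hJ4] at this
  simp only [bot_smul, sup_bot_eq] at this
  intro w
  have hw : w ∈ (A ∙ v) := this trivial
  exact mem_span_singleton.mp hw

/-- A 6-dimensional module over a 5-dimensional algebra needs at least 2 generators. -/
lemma aux_two_gen {k A : Type*} [Field k] [CommRing A] [Algebra k A]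
    [FiniteDimensional k A] (J : Ideal A) (hJ4 : J ^ 4 = ⊥) (hdimA : Module.finrank k A = 5)
    {M : Type*} [AddCommGroup M] [Module A M] [Module k M] [IsScalarTower k A M]
    [FiniteDimensional k M] (hdimM : Module.finrank k M = 6) :
    2 ≤ Module.finrank k (M ⧸ ((J • ⊤ : Submodule A M).restrictScalars k)) := by
  by_contra hlt
  push_neg at hlt
  have h1 : Module.finrank k (M ⧸ ((J • ⊤ : Submodule A M).restrictScalars k)) ≤ 1 := by omega
  obtain ⟨q, hq⟩ := (Module.finrank_le_one_iff_top_isPrincipal).mp h1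
  obtain ⟨v, rfl⟩ := Submodule.Quotient.mk_surjective _ q
  have hgen : ∀ w : M, ∃ c : k, w - c • v ∈ (J • ⊤ : Submodule A M) := by
    intro w
    have : (Submodule.Quotient.mk w : M ⧸ ((J • ⊤ : Submodule A M).restrictScalars k))
        ∈ Submodule.span k {(Submodule.Quotient.mk v : M ⧸ ((J • ⊤ : Submodule A M).restrictScalars k))} := by
      rw [← hq]; trivial
    obtain ⟨c, hc⟩ := Submodule.mem_span_singleton.mp this
    refine ⟨c, ?_⟩
    have : (Submodule.Quotient.mk (w - c • v) : M ⧸ ((J • ⊤ : Submodule A M).restrictScalars k)) = 0 := by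
      rw [Submodule.Quotient.mk_sub, Submodule.Quotient.mk_smul, hc, sub_self]
    exact (Submodule.Quotient.mk_eq_zero _).mp this
  have hcyc := aux_cyclic J hJ4 v hgen
  let ℓ : A →ₗ[k] M :=
    { toFun := fun a => a • v
      map_add' := fun a b => add_smul a b v
      map_smul' := fun c a => smul_assoc c a v }
  have hsurj : Function.Surjective ℓ := fun w => hcyc w
  have : Module.finrank k M ≤ Module.finrank k A := by
    have h2 := LinearMap.finrank_range_le ℓ
    rwa [LinearMap.range_eq_top.mpr hsurj, finrank_top] at h2
  omega

open Submodule Module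

section DualAct

variable (k A V : Type*) [Field k] [CommRing A] [Algebra k A]
  [AddCommGroup V] [Module A V] [Module k V] [IsScalarTower k A V] [SMulCommClass A k V]

variable {k A V}

/-- Type synonym for the `k`-dual of `V`, carrying the contragredient-style `A`-action
`(a • f) v = f (a • v)` (no twist needed since `A` is commutative). -/
def AuxDual (k : Type*) (A : Type*) (V : Type*) [Field k] [AddCommGroup V]
    [Module k V] : Type _ := V →ₗ[k] k

/-- Interpret an element of the dual synonym as a linear functional. -/
def AuxDual.toFunl (f : AuxDual k A V) : V →ₗ[k] k := f

/-- Build an element of the dual synonym from a linear functional. -/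
def AuxDual.of (f : V →ₗ[k] k) : AuxDual k A V := f

instance : AddCommGroup (AuxDual k A V) := inferInstanceAs (AddCommGroup (V →ₗ[k] k))
instance : Module k (AuxDual k A V) := inferInstanceAs (Module k (V →ₗ[k] k))

lemma AuxDual.ext {f g : AuxDual k A V} (h : ∀ v, f.toFunl v = g.toFunl v) : f = g :=
  LinearMap.ext h

instance auxDualModule : Module A (AuxDual k A V) where
  smul a f := AuxDual.of
    { toFun := fun v => f.toFunl (a • v)
      map_add' := by intro x y; rw [smul_add, map_add]
      map_smul' := by intro c x; simp [smul_comm a c x] }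
  one_smul f := by
    apply AuxDual.ext; intro v
    show f.toFunl ((1:A) • v) = f.toFunl v
    rw [one_smul]
  mul_smul a b f := by
    apply AuxDual.ext; intro v
    show f.toFunl ((a * b) • v) = f.toFunl (b • a • v)
    rw [mul_comm, mul_smul]
  smul_zero a := by apply AuxDual.ext; intro v; rfl
  smul_add a f g := by apply AuxDual.ext; intro v; rfl
  add_smul a b f := by
    apply AuxDual.ext; intro v
    show f.toFunl ((a + b) • v) = f.toFunl (a • v) + f.toFunl (b • v)
    rw [add_smul, map_add]
  zero_smul f := by
    apply AuxDual.ext; intro v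
    show f.toFunl ((0 : A) • v) = 0
    rw [zero_smul, map_zero]

lemma AuxDual.smul_apply (a : A) (f : AuxDual k A V) (v : V) :
    (a • f).toFunl v = f.toFunl (a • v) := rfl

instance auxDualTower : IsScalarTower k A (AuxDual k A V) where
  smul_assoc c a f := by
    apply AuxDual.ext; intro v
    show f.toFunl ((c • a) • v) = c • (f.toFunl (a • v))
    rw [smul_assoc, map_smul, smul_eq_mul]

/-- The dual synonym is `k`-linearly the dual. -/
def AuxDual.equiv : AuxDual k A V ≃ₗ[k] Module.Dual k V where
  toFun := AuxDual.toFunl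
  map_add' _ _ := rfl
  map_smul' _ _ := rfl
  invFun := AuxDual.of
  left_inv _ := rfl
  right_inv _ := rfl

lemma auxDual_finrank : Module.finrank k (AuxDual k A V) = Module.finrank k V :=
  (AuxDual.equiv : AuxDual k A V ≃ₗ[k] Module.Dual k V).finrank_eq.trans
    Subspace.dual_finrank_eq

end DualAct

section Soc

variable {k A V : Type*} [Field k] [CommRing A] [Algebra k A]
  [AddCommGroup V] [Module A V] [Module k V] [IsScalarTower k A V] [SMulCommClass A k V]

/-- The socle-type submodule `{v | J v = 0}`. -/
def auxSoc (J : Ideal A) : Submodule A V where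
  carrier := {v | ∀ x ∈ J, x • v = 0}
  add_mem' := by
    intro u w hu hw x hx
    rw [smul_add, hu x hx, hw x hx, add_zero]
  zero_mem' := fun x _ => smul_zero x
  smul_mem' := by
    intro a v hv x hx
    rw [smul_smul, mul_comm, ← smul_smul, hv x hx, smul_zero]

lemma mem_auxSoc {J : Ideal A} {v : V} : v ∈ auxSoc (V := V) J ↔ ∀ x ∈ J, x • v = 0 :=
  Iff.rfl

lemma auxSoc_eq_dualCoannihilator (J : Ideal A) :
    (auxSoc (V := V) J).restrictScalars k =
      Submodule.dualCoannihilator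
        (Submodule.map ((AuxDual.equiv : AuxDual k A V ≃ₗ[k] Module.Dual k V) : AuxDual k A V →ₗ[k] Module.Dual k V)
          ((J • (⊤ : Submodule A (AuxDual k A V))).restrictScalars k)) := by
  ext v
  rw [Submodule.mem_dualCoannihilator]
  constructor
  · intro hv φ hφ
    obtain ⟨f, hf, rfl⟩ := hφ
    simp only [SetLike.mem_coe, Submodule.restrictScalars_mem] at hf
    refine Submodule.smul_induction_on hf ?_ ?_
    · intro x hx g _
      show (x • g).toFunl v = 0
      rw [AuxDual.smul_apply, hv x hx, map_zero]
    · intro f g hf hg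
      show (f + g).toFunl v = 0
      have : (f + g).toFunl v = f.toFunl v + g.toFunl v := rfl
      rw [this]
      change _ = (0 : k) at hf hg
      change f.toFunl v = 0 at hf
      change g.toFunl v = 0 at hg
      rw [hf, hg, add_zero]
  · intro hv x hx
    rw [← Module.forall_dual_apply_eq_zero_iff k (x • v)]
    intro φ
    have hmem : (x • AuxDual.of (k := k) (A := A) φ) ∈
        ((J • (⊤ : Submodule A (AuxDual k A V))).restrictScalars k) :=
      (Submodule.restrictScalars_mem k _ _).mpr (Submodule.smul_mem_smul hx Submodule.mem_top)
    have h0 := hv _ ⟨_, hmem, rfl⟩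
    exact h0

end Soc

section Ann

variable {k A : Type*} [Field k] [CommRing A] [Algebra k A] [FiniteDimensional k A]

/-- In an algebra with Hilbert–Samuel type `(1,2,1,1)` for the ideal `J`, the
annihilator of `J` has dimension at most `2`. -/
lemma aux_ann_le_two (J : Ideal A) (hJ4 : J ^ 4 = ⊥)
    (hunits : ∀ a : A, a ∉ J → IsUnit a)
    (hJJ2 : Module.finrank k
      (↥(J.restrictScalars k) ⧸
        ((J ^ 2).restrictScalars k).comap (J.restrictScalars k).subtype) = 2)
    (hJ2J3 : Module.finrank k
      (↥((J ^ 2).restrictScalars k) ⧸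
        ((J ^ 3).restrictScalars k).comap ((J ^ 2).restrictScalars k).subtype) = 1)
    (hJ3 : Module.finrank k ((J ^ 3).restrictScalars k) = 1) :
    Module.finrank k ((J.annihilator).restrictScalars k) ≤ 2 := by
  have hJ3ne : J ^ 3 ≠ ⊥ := by
    intro h
    rw [h, Submodule.restrictScalars_bot, finrank_bot] at hJ3
    omega
  -- find z ∈ J² \ J³
  have hJ23 : ¬ (J ^ 2 ≤ J ^ 3) := by
    intro hle
    have : ((J ^ 3).restrictScalars k).comap ((J ^ 2).restrictScalars k).subtype = ⊤ := by
      ext x; simpa using hle x.2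
    rw [this] at hJ2J3
    have : Module.finrank k
        (↥((J ^ 2).restrictScalars k) ⧸ (⊤ : Submodule k ↥((J ^ 2).restrictScalars k))) = 0 := by
      have : Subsingleton
          (↥((J ^ 2).restrictScalars k) ⧸ (⊤ : Submodule k ↥((J ^ 2).restrictScalars k))) :=
        Submodule.Quotient.subsingleton_iff.mpr rfl
      exact Module.finrank_zero_of_subsingleton
    omega
  obtain ⟨z, hz2, hz3⟩ := SetLike.not_le_iff_exists.mp hJ23
  -- every element of J² is c • z mod J³
  have hspan : ∀ w ∈ J ^ 2, ∃ c : k, w - c • z ∈ J ^ 3 := by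
    set Q := ↥((J ^ 2).restrictScalars k) ⧸
      ((J ^ 3).restrictScalars k).comap ((J ^ 2).restrictScalars k).subtype with hQ
    have hzbar : (Submodule.Quotient.mk (⟨z, hz2⟩ : ↥((J ^ 2).restrictScalars k)) : Q) ≠ 0 := by
      rw [Ne, Submodule.Quotient.mk_eq_zero]
      exact fun h => hz3 h
    have hsp : Submodule.span k
        {(Submodule.Quotient.mk (⟨z, hz2⟩ : ↥((J ^ 2).restrictScalars k)) : Q)} = ⊤ := by
      apply Submodule.eq_top_of_finrank_eq
      rw [finrank_span_singleton hzbar, hJ2J3]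
    intro w hw
    have : (Submodule.Quotient.mk (⟨w, hw⟩ : ↥((J ^ 2).restrictScalars k)) : Q) ∈
        Submodule.span k
          {(Submodule.Quotient.mk (⟨z, hz2⟩ : ↥((J ^ 2).restrictScalars k)) : Q)} := by
      rw [hsp]; trivial
    obtain ⟨c, hc⟩ := Submodule.mem_span_singleton.mp this
    refine ⟨c, ?_⟩
    have : (Submodule.Quotient.mk ((⟨w, hw⟩ : ↥((J ^ 2).restrictScalars k)) -
        c • ⟨z, hz2⟩) : Q) = 0 := by
      rw [Submodule.Quotient.mk_sub, Submodule.Quotient.mk_smul, hc, sub_self]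
    have hmem := (Submodule.Quotient.mk_eq_zero _).mp this
    simpa using hmem
  -- z does not kill J
  have hzJ : ¬ (∀ x ∈ J, z * x = 0) := by
    intro hall
    apply hJ3ne
    have h32 : J ^ 3 = J ^ 2 * J := pow_succ J 2
    rw [h32, eq_bot_iff]
    rw [Ideal.mul_le]
    intro r hr s hs
    obtain ⟨c, hc⟩ := hspan r hr
    have hr' : r = c • z + (r - c • z) := by abel
    rw [hr', add_mul]
    have h1 : (c • z) * s = 0 := by rw [smul_mul_assoc, hall s hs, smul_zero]
    have h2 : (r - c • z) * s ∈ J ^ 4 := by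
      rw [show (4 : ℕ) = 3 + 1 from rfl, pow_succ]
      exact Ideal.mul_mem_mul hc hs
    rw [hJ4] at h2
    rw [h1, zero_add]
    exact h2
  -- annihilator is inside J
  have hAnnJ : J.annihilator ≤ J := by
    intro a ha
    by_contra hnot
    have hu := hunits a hnot
    have hz2' : z ∈ J := Ideal.pow_le_self (by norm_num) hz2
    have : a * z = 0 := by
      have := Submodule.mem_annihilator.mp ha z hz2'
      simpa [smul_eq_mul] using this
    have : z = 0 := (hu.mul_right_eq_zero).mp this
    exact hz3 (this ▸ (J ^ 3).zero_mem)
  -- annihilator ∩ J² ⊆ J³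
  have hAnnJ2 : ∀ a ∈ J.annihilator, a ∈ J ^ 2 → a ∈ J ^ 3 := by
    intro a ha ha2
    obtain ⟨c, hc⟩ := hspan a ha2
    rcases eq_or_ne c 0 with rfl | hcne
    · simpa using hc
    · exfalso
      apply hzJ
      intro x hx
      have h0 : a * x = 0 := by
        have := Submodule.mem_annihilator.mp ha x hx
        simpa [smul_eq_mul] using this
      have h2 : (a - c • z) * x = 0 := by
        have : (a - c • z) * x ∈ J ^ 4 := by
          rw [show (4 : ℕ) = 3 + 1 from rfl, pow_succ]
          exact Ideal.mul_mem_mul hc hx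
        rwa [hJ4, Submodule.mem_bot] at this
      have : c • (z * x) = 0 := by
        have hexp : a * x - (a - c • z) * x = c • (z * x) := by
          rw [sub_mul, smul_mul_assoc, sub_sub_cancel]
        rw [← hexp, h0, h2, sub_zero]
      exact (smul_eq_zero.mp this).resolve_left hcne
  -- now bound the dimension of the annihilator
  set Annk := (J.annihilator).restrictScalars k with hAnnk
  set Jk := J.restrictScalars k with hJk
  have hle : Annk ≤ Jk := fun a ha => hAnnJ ha
  let q : ↥Annk →ₗ[k] (↥Jk ⧸ ((J ^ 2).restrictScalars k).comap Jk.subtype) :=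
    (Submodule.mkQ _).comp (Submodule.inclusion hle)
  have hrn := LinearMap.finrank_range_add_finrank_ker q
  -- kernel bound
  have hker : Module.finrank k ↥(LinearMap.ker q) ≤ 1 := by
    let ι : ↥(LinearMap.ker q) →ₗ[k] ↥((J ^ 3).restrictScalars k) :=
      { toFun := fun x => ⟨(x.1.1 : A), by
          have hx2 : (x.1.1 : A) ∈ J ^ 2 := by
            have := x.2
            rw [LinearMap.mem_ker] at this
            have h0 : Submodule.Quotient.mk (Submodule.inclusion hle x.1) = (0 :
              ↥Jk ⧸ ((J ^ 2).restrictScalars k).comap Jk.subtype) := this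
            have := (Submodule.Quotient.mk_eq_zero _).mp h0
            simpa using this
          exact hAnnJ2 x.1.1 x.1.2 hx2⟩
        map_add' := fun x y => rfl
        map_smul' := fun c x => rfl }
    have hinj : Function.Injective ι := by
      intro x y h
      apply Subtype.ext; apply Subtype.ext
      have h' := congrArg Subtype.val h
      exact h'
    have := LinearMap.finrank_le_finrank_of_injective hinj
    rwa [hJ3] at this
  -- range bound
  have hrange : Module.finrank k ↥(LinearMap.range q) ≤ 1 := by
    by_contra hgt
    push_neg at hgt
    have hfin : Module.finrank k ↥(LinearMap.range q) ≤ 2 := by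
      have := Submodule.finrank_le (LinearMap.range q)
      omega
    have htop : LinearMap.range q = ⊤ := by
      apply Submodule.eq_top_of_finrank_eq
      omega
    have hsurj : ∀ x ∈ J, ∃ a ∈ J.annihilator, x - a ∈ J ^ 2 := by
      intro x hx
      have : (Submodule.Quotient.mk (⟨x, hx⟩ : ↥Jk) :
          ↥Jk ⧸ ((J ^ 2).restrictScalars k).comap Jk.subtype) ∈ LinearMap.range q := by
        rw [htop]; trivial
      obtain ⟨y, hy⟩ := this
      refine ⟨y.1, y.2, ?_⟩
      have h0 : (Submodule.Quotient.mk ((⟨x, hx⟩ : ↥Jk) - Submodule.inclusion hle y) :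
          ↥Jk ⧸ ((J ^ 2).restrictScalars k).comap Jk.subtype) = 0 := by
        rw [Submodule.Quotient.mk_sub]
        rw [show (Submodule.Quotient.mk (Submodule.inclusion hle y) :
          ↥Jk ⧸ ((J ^ 2).restrictScalars k).comap Jk.subtype) =
          q y from rfl, hy, sub_self]
      have := (Submodule.Quotient.mk_eq_zero _).mp h0
      simpa using this
    have h23 : J ^ 2 ≤ J ^ 3 := by
      have h22 : J ^ 2 = J * J := sq J
      rw [h22, Ideal.mul_le]
      intro r hr s hs
      obtain ⟨a, ha, hs2⟩ := hsurj s hs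
      have h1 : r * a = 0 := by
        have := Submodule.mem_annihilator.mp ha r hr
        rw [smul_eq_mul, mul_comm] at this
        exact this
      have h2 : r * (s - a) ∈ J ^ 3 := by
        have : J * J ^ 2 = J ^ 3 := (pow_succ' J 2).symm
        rw [← this]
        exact Ideal.mul_mem_mul hr hs2
      have : r * s = r * a + r * (s - a) := by ring
      rw [this, h1, zero_add]
      exact h2
    apply hJ3ne
    rw [eq_bot_iff, ← hJ4]
    calc J ^ 3 = J ^ 2 * J := pow_succ J 2
    _ ≤ J ^ 3 * J := Ideal.mul_mono_left h23
    _ = J ^ 4 := (pow_succ J 3).symm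
  omega

end Ann

set_option maxHeartbeats 2000000 in
/-- Let `k` be an algebraically closed field and `A = k·1 ⊕ J` a local commutative
`k`-algebra of dimension `5` with Hilbert–Samuel type `(1,2,1,1)`, i.e.
`dim (J/J²) = 2`, `dim (J²/J³) = 1`, `dim J³ = 1`, `J⁴ = 0`.  Let `V` be a faithful
`A`-module of dimension `6`.  Then `dim_k End_A(V) ≥ 6`; in particular the image of `A`
in `M₆(k) ≅ End_k(V)` is not a maximal commutative subalgebra. -/

theorem type_1_2_1_1_endomorphisms_and_not_maximal
    (k : Type*) [Field k] [IsAlgClosed k]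
    (A : Type*) [CommRing A] [Algebra k A] [IsLocalRing A]
    (hsplit : ∀ a : A, ∃ (c : k) (x : A),
      x ∈ IsLocalRing.maximalIdeal A ∧ a = algebraMap k A c + x)
    (hdimA : Module.finrank k A = 5)
    (hJJ2 : subquotientDim k ((IsLocalRing.maximalIdeal A).restrictScalars k)
      (((IsLocalRing.maximalIdeal A) ^ 2).restrictScalars k) = 2)
    (hJ2J3 : subquotientDim k (((IsLocalRing.maximalIdeal A) ^ 2).restrictScalars k)
      (((IsLocalRing.maximalIdeal A) ^ 3).restrictScalars k) = 1)
    (hJ3 : Module.finrank k (((IsLocalRing.maximalIdeal A) ^ 3).restrictScalars k) = 1)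
    (hJ4 : (IsLocalRing.maximalIdeal A) ^ 4 = ⊥)
    (V : Type*) [AddCommGroup V] [Module A V] [Module k V]
    [IsScalarTower k A V] [SMulCommClass A k V]
    (hfaith : ∀ a : A, (∀ v : V, a • v = 0) → a = 0)
    (hdimV : Module.finrank k V = 6) :
    6 ≤ Module.finrank k (V →ₗ[A] V) ∧
    (Algebra.lsmul k k V : A →ₐ[k] Module.End k V).range ≠
      Subalgebra.centralizer k
        ((Algebra.lsmul k k V : A →ₐ[k] Module.End k V).range : Set (Module.End k V)) := by
  classical
  set J := IsLocalRing.maximalIdeal A with hJdef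
  haveI hFA : FiniteDimensional k A := FiniteDimensional.of_finrank_pos (by rw [hdimA]; norm_num)
  haveI hFV : FiniteDimensional k V := FiniteDimensional.of_finrank_pos (by rw [hdimV]; norm_num)
  have hJJ2' : Module.finrank k
      (↥(J.restrictScalars k) ⧸
        ((J ^ 2).restrictScalars k).comap (J.restrictScalars k).subtype) = 2 := hJJ2
  have hJ2J3' : Module.finrank k
      (↥((J ^ 2).restrictScalars k) ⧸
        ((J ^ 3).restrictScalars k).comap ((J ^ 2).restrictScalars k).subtype) = 1 := hJ2J3
  have hunits : ∀ a : A, a ∉ J → IsUnit a := by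
    intro a ha
    by_contra h
    exact ha ((IsLocalRing.mem_maximalIdeal a).mpr h)
  have hAnn := aux_ann_le_two (k := k) J hJ4 hunits hJJ2' hJ2J3' hJ3
  -- the embedding of `A` into `End_A(V)`
  let μ : A →ₗ[k] (V →ₗ[A] V) :=
    { toFun := fun a =>
        { toFun := fun v => a • v
          map_add' := fun v w => smul_add a v w
          map_smul' := fun b v => by
            simp only [RingHom.id_apply]
            rw [← mul_smul, mul_comm, mul_smul] }
      map_add' := fun a b => LinearMap.ext fun v => add_smul a b v
      map_smul' := fun c a => LinearMap.ext fun v => by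
        simp only [RingHom.id_apply, LinearMap.smul_apply]
        exact smul_assoc c a v }
  have hμinj : Function.Injective μ := by
    intro a b hab
    have h : ∀ v : V, (a - b) • v = 0 := by
      intro v
      have h := LinearMap.congr_fun hab v
      rw [sub_smul, show a • v = (μ a) v from rfl, show b • v = (μ b) v from rfl, h, sub_self]
    exact sub_eq_zero.mp (hfaith _ h)
  have hPfin : Module.finrank k ↥(LinearMap.range μ) = 5 := by
    rw [LinearMap.finrank_range_of_inj hμinj, hdimA]
  haveI hFE : FiniteDimensional k (V →ₗ[A] V) :=
    FiniteDimensional.of_injective (LinearMap.restrictScalarsₗ k A V V k)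
      (LinearMap.restrictScalars_injective k)
  -- dimension of `V / JV` is at least 2
  set JVk : Submodule k V := (J • ⊤ : Submodule A V).restrictScalars k with hJVk
  have d0 : 2 ≤ Module.finrank k (V ⧸ JVk) := aux_two_gen J hJ4 hdimA hdimV
  -- dimension of the socle is at least 2
  haveI : FiniteDimensional k (AuxDual k A V) :=
    FiniteDimensional.of_finrank_pos (by rw [auxDual_finrank, hdimV]; norm_num)
  have hDdim : Module.finrank k (AuxDual k A V) = 6 := by rw [auxDual_finrank, hdimV]
  have hW2 := aux_two_gen (k := k) J hJ4 hdimA (M := AuxDual k A V) hDdim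
  set W : Submodule k (AuxDual k A V) :=
    (J • ⊤ : Submodule A (AuxDual k A V)).restrictScalars k with hWdef
  have hWquot := Submodule.finrank_quotient_add_finrank W
  have hWle : Module.finrank k ↥W ≤ 4 := by rw [hDdim] at hWquot; omega
  have hmapW : Module.finrank k
      ↥(Submodule.map ((AuxDual.equiv : AuxDual k A V ≃ₗ[k] Module.Dual k V) : AuxDual k A V →ₗ[k] Module.Dual k V) W)
      = Module.finrank k ↥W :=
    LinearEquiv.finrank_map_eq _ _
  have hcoann := Subspace.finrank_add_finrank_dualCoannihilator_eq
    (Submodule.map ((AuxDual.equiv : AuxDual k A V ≃ₗ[k] Module.Dual k V) : AuxDual k A V →ₗ[k] Module.Dual k V) W)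
  have hsoc : 2 ≤ Module.finrank k ↥((auxSoc (V := V) J).restrictScalars k) := by
    rw [auxSoc_eq_dualCoannihilator (k := k) J, ← hWdef]
    rw [hdimV] at hcoann
    omega
  -- the Hom-space of maps through `V/JV` into the socle
  let F : ((V ⧸ JVk) →ₗ[k] ↥((auxSoc (V := V) J).restrictScalars k)) → (V →ₗ[A] V) :=
    fun g =>
      { toFun := fun v => ((g (Submodule.Quotient.mk v) :
          ↥((auxSoc (V := V) J).restrictScalars k)) : V)
        map_add' := fun v w => by
          show ((g (Submodule.Quotient.mk (v + w)) :
            ↥((auxSoc (V := V) J).restrictScalars k)) : V) = _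
          rw [Submodule.Quotient.mk_add, map_add]
          rfl
        map_smul' := fun a v => by
          obtain ⟨c, x, hx, rfl⟩ := hsplit a
          simp only [RingHom.id_apply]
          show ((g (Submodule.Quotient.mk ((algebraMap k A c + x) • v)) :
            ↥((auxSoc (V := V) J).restrictScalars k)) : V) = _
          have h1 : (algebraMap k A c + x) • v = c • v + x • v := by
            rw [add_smul, algebraMap_smul]
          have h2 : (Submodule.Quotient.mk (x • v) : V ⧸ JVk) = 0 :=
            (Submodule.Quotient.mk_eq_zero _).mpr ((Submodule.restrictScalars_mem k _ _).mpr (Submodule.smul_mem_smul hx trivial))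
          have h3 : x • ((g (Submodule.Quotient.mk v) :
              ↥((auxSoc (V := V) J).restrictScalars k)) : V) = 0 :=
            (g (Submodule.Quotient.mk v)).2 x hx
          have h4 : (Submodule.Quotient.mk ((algebraMap k A c + x) • v) : V ⧸ JVk)
              = c • Submodule.Quotient.mk v := by
            rw [h1, Submodule.Quotient.mk_add, h2, add_zero, Submodule.Quotient.mk_smul]
          rw [h4, map_smul, add_smul, algebraMap_smul, Submodule.coe_smul, h3, add_zero] }
  let ι : ((V ⧸ JVk) →ₗ[k] ↥((auxSoc (V := V) J).restrictScalars k)) →ₗ[k] (V →ₗ[A] V) :=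
    { toFun := F
      map_add' := fun g h => LinearMap.ext fun v => rfl
      map_smul' := fun c g => LinearMap.ext fun v => rfl }
  have hιinj : Function.Injective ι := by
    intro g h hgh
    apply LinearMap.ext
    intro q
    obtain ⟨v, rfl⟩ := Submodule.Quotient.mk_surjective _ q
    apply Subtype.ext
    exact LinearMap.congr_fun hgh v
  have hQfin : Module.finrank k ↥(LinearMap.range ι) =
      Module.finrank k (V ⧸ JVk) *
        Module.finrank k ↥((auxSoc (V := V) J).restrictScalars k) := by
    rw [LinearMap.finrank_range_of_inj hιinj, Module.finrank_linearMap]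
  -- the intersection is controlled by the annihilator of J
  have hcle : Submodule.comap μ (LinearMap.range ι) ≤ (J.annihilator).restrictScalars k := by
    intro a ha
    obtain ⟨g, hg⟩ := ha
    show a ∈ J.annihilator
    rw [Submodule.mem_annihilator]
    intro x hx
    rw [smul_eq_mul]
    apply hfaith
    intro v
    have h3 : (Submodule.Quotient.mk (x • v) : V ⧸ JVk) = 0 :=
      (Submodule.Quotient.mk_eq_zero _).mpr ((Submodule.restrictScalars_mem k _ _).mpr (Submodule.smul_mem_smul hx trivial))
    have h4 : (ι g) (x • v) = 0 := by
      show ((g (Submodule.Quotient.mk (x • v)) :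
        ↥((auxSoc (V := V) J).restrictScalars k)) : V) = 0
      rw [h3, map_zero]
      rfl
    calc (a * x) • v = a • (x • v) := mul_smul a x v
    _ = (μ a) (x • v) := rfl
    _ = (ι g) (x • v) := by rw [hg]
    _ = 0 := h4
  have hinf : Module.finrank k ↥(LinearMap.range μ ⊓ LinearMap.range ι) ≤ 2 := by
    have h1 : LinearMap.range μ ⊓ LinearMap.range ι
        = Submodule.map μ (Submodule.comap μ (LinearMap.range ι)) :=
      (Submodule.map_comap_eq μ _).symm
    rw [h1]
    calc Module.finrank k ↥(Submodule.map μ (Submodule.comap μ (LinearMap.range ι)))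
        ≤ Module.finrank k ↥(Submodule.comap μ (LinearMap.range ι)) :=
          Submodule.finrank_map_le μ _
    _ ≤ Module.finrank k ↥((J.annihilator).restrictScalars k) := Submodule.finrank_mono hcle
    _ ≤ 2 := hAnn
  have hsup := Submodule.finrank_sup_add_finrank_inf_eq (LinearMap.range μ) (LinearMap.range ι)
  have h6 : 6 ≤ Module.finrank k (V →ₗ[A] V) := by
    have hle := Submodule.finrank_le (LinearMap.range μ ⊔ LinearMap.range ι)
    have q4 : 4 ≤ Module.finrank k ↥(LinearMap.range ι) := by
      rw [hQfin]
      calc (4 : ℕ) = 2 * 2 := by norm_num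
      _ ≤ _ := Nat.mul_le_mul d0 hsoc
    omega
  refine ⟨h6, ?_⟩
  intro hEq
  set S := (Algebra.lsmul k k V : A →ₐ[k] Module.End k V).range with hS
  have hmem : ∀ f : V →ₗ[A] V,
      (f.restrictScalars k : Module.End k V) ∈ Subalgebra.toSubmodule S := by
    intro f
    rw [Subalgebra.mem_toSubmodule, hEq, Subalgebra.mem_centralizer_iff]
    intro g hg
    rw [SetLike.mem_coe, hS, AlgHom.mem_range] at hg
    obtain ⟨a, rfl⟩ := hg
    apply LinearMap.ext
    intro v
    rw [Module.End.mul_apply, Module.End.mul_apply]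
    show (Algebra.lsmul k k V a) (f v) = (f.restrictScalars k) ((Algebra.lsmul k k V a) v)
    show a • (f v) = f (a • v)
    rw [f.map_smul]
  let ρ : (V →ₗ[A] V) →ₗ[k] ↥(Subalgebra.toSubmodule S) :=
    LinearMap.codRestrict _ (LinearMap.restrictScalarsₗ k A V V k) hmem
  have hρinj : Function.Injective ρ := by
    intro f g h
    exact LinearMap.restrictScalars_injective k (congrArg Subtype.val h)
  have h1 : Module.finrank k (V →ₗ[A] V) ≤ Module.finrank k ↥(Subalgebra.toSubmodule S) :=
    LinearMap.finrank_le_finrank_of_injective hρinj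
  let σ : A →ₗ[k] ↥(Subalgebra.toSubmodule S) :=
    LinearMap.codRestrict _ (Algebra.lsmul k k V : A →ₐ[k] Module.End k V).toLinearMap
      (fun a => by rw [Subalgebra.mem_toSubmodule]; exact ⟨a, rfl⟩)
  have hσ : Function.Surjective σ := by
    rintro ⟨x, hx⟩
    rw [Subalgebra.mem_toSubmodule] at hx
    obtain ⟨a, rfl⟩ := hx
    exact ⟨a, rfl⟩
  have h2 : Module.finrank k ↥(Subalgebra.toSubmodule S) ≤ 5 := by
    have h := LinearMap.finrank_range_le σ
    rw [LinearMap.range_eq_top.mpr hσ, finrank_top, hdimA] at h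
    exact h
  omega
end

section
/- Let k be an algebraically closed field and let A = k·1 ⊕ J be a local commutative k-algebra of dimension 5 with Hilbert–Samuel type (1,3,1), i.e. dim_k(J/J²) = 3, dim_k J² = 1, J³ = 0. Let V be a faithful A-module with dim_k V = 6 such that dim_k(V/JV) = 4, dim_k(JV/J²V) = 1, dim_k(J²V) = 1. Then dim_k End_A(V) ≥ 8. -/
set_option linter.unusedSectionVars false
set_option maxHeartbeats 1000000

section Aux

variable {k A V : Type*} [Field k] [CommRing A] [Algebra k A]
    [AddCommGroup V] [Module A V] [Module k V] [IsScalarTower k A V] [SMulCommClass A k V]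

noncomputable def smulOpAux (a : A) : V →ₗ[k] V where
  toFun v := a • v
  map_add' := smul_add a
  map_smul' t v := smul_comm a t v

@[simp] lemma smulOpAux_apply (a : A) (v : V) : (smulOpAux (k := k) a) v = a • v := rfl

noncomputable def actOnAux (w : V) : A →ₗ[k] V where
  toFun a := a • w
  map_add' a b := add_smul a b w
  map_smul' t a := smul_assoc t a w

@[simp] lemma actOnAux_apply (w : V) (a : A) : (actOnAux (k := k) w) a = a • w := rfl

end Aux

/-- Let `k` be an algebraically closed field and `A = k·1 ⊕ J` a local commutative
`k`-algebra of dimension `5` with Hilbert–Samuel type `(1,3,1)`, i.e. `dim (J/J²) = 3`,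
`dim J² = 1`, `J³ = 0`.  Let `V` be a faithful `A`-module of dimension `6` with
`dim (V/JV) = 4`, `dim (JV/J²V) = 1`, `dim J²V = 1`.  Then `dim_k End_A(V) ≥ 8`. -/
theorem type_1_3_1_filtration_4_1_1_endomorphisms
    (k : Type*) [Field k] [IsAlgClosed k]
    (A : Type*) [CommRing A] [Algebra k A] [IsLocalRing A]
    (hsplit : ∀ a : A, ∃ (c : k) (x : A),
      x ∈ IsLocalRing.maximalIdeal A ∧ a = algebraMap k A c + x)
    (hdimA : Module.finrank k A = 5)
    (hJJ2 : subquotientDim k ((IsLocalRing.maximalIdeal A).restrictScalars k)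
      (((IsLocalRing.maximalIdeal A) ^ 2).restrictScalars k) = 3)
    (hJ2 : Module.finrank k (((IsLocalRing.maximalIdeal A) ^ 2).restrictScalars k) = 1)
    (hJ3 : (IsLocalRing.maximalIdeal A) ^ 3 = ⊥)
    (V : Type*) [AddCommGroup V] [Module A V] [Module k V]
    [IsScalarTower k A V] [SMulCommClass A k V]
    (hfaith : ∀ a : A, (∀ v : V, a • v = 0) → a = 0)
    (hdimV : Module.finrank k V = 6)
    (hVJV : Module.finrank k
      (V ⧸ (IsLocalRing.maximalIdeal A • (⊤ : Submodule A V)).restrictScalars k) = 4)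
    (hJVJ2V : subquotientDim k
      ((IsLocalRing.maximalIdeal A • (⊤ : Submodule A V)).restrictScalars k)
      (((IsLocalRing.maximalIdeal A) ^ 2 • (⊤ : Submodule A V)).restrictScalars k) = 1)
    (hJ2V : Module.finrank k
      (((IsLocalRing.maximalIdeal A) ^ 2 • (⊤ : Submodule A V)).restrictScalars k) = 1) :
    8 ≤ Module.finrank k (V →ₗ[A] V) := by
  classical
  set M : Ideal A := IsLocalRing.maximalIdeal A with hM
  have fdA : FiniteDimensional k A := FiniteDimensional.of_finrank_pos (by rw [hdimA]; norm_num)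
  have fdV : FiniteDimensional k V := FiniteDimensional.of_finrank_pos (by rw [hdimV]; norm_num)
  set JVA : Submodule A V := M • (⊤ : Submodule A V) with hJVAdef
  set JV : Submodule k V := JVA.restrictScalars k with hJVdef
  set J2VA : Submodule A V := (M ^ 2) • (⊤ : Submodule A V) with hJ2VAdef
  set J2V : Submodule k V := J2VA.restrictScalars k with hJ2Vdef
  set J : Submodule k A := M.restrictScalars k with hJdef
  set J2 : Submodule k A := (M ^ 2).restrictScalars k with hJ2def
  -- dimension bookkeeping
  have hJVrank : Module.finrank k JV = 2 := by
    have h := Submodule.finrank_quotient_add_finrank JV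
    rw [hVJV, hdimV] at h; omega
  have hJ2leJ : J2 ≤ J := fun x hx => Ideal.pow_le_self two_ne_zero hx
  have hJrank : Module.finrank k J = 4 := by
    unfold subquotientDim at hJJ2
    have h := Submodule.finrank_quotient_add_finrank (J2.comap J.subtype)
    have h2 : Module.finrank k (J2.comap J.subtype) = 1 := by
      rw [LinearEquiv.finrank_eq (Submodule.comapSubtypeEquivOfLe hJ2leJ)]; exact hJ2
    rw [hJJ2, h2] at h; omega
  -- membership helpers
  have memJV : ∀ {x : A}, x ∈ M → ∀ v : V, x • v ∈ JVA :=
    fun hx v => Submodule.smul_mem_smul hx trivial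
  have memJ2V : ∀ {x : A}, x ∈ M → ∀ {n : V}, n ∈ JVA → x • n ∈ J2VA := by
    intro x hx n hn
    refine Submodule.smul_induction_on hn (fun y hy v _ => ?_) (fun a b ha hb => ?_)
    · rw [smul_smul]
      exact Submodule.smul_mem_smul (by rw [pow_two]; exact Ideal.mul_mem_mul hx hy) trivial
    · rw [smul_add]; exact Submodule.add_mem _ ha hb
  have hM3 : ∀ {z : A}, z ∈ M ^ 3 → z = 0 := by
    intro z hz; rw [hJ3] at hz; exact (Submodule.mem_bot A).mp hz
  have killJ2V : ∀ {x : A}, x ∈ M → ∀ {n : V}, n ∈ J2VA → x • n = 0 := by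
    intro x hx n hn
    refine Submodule.smul_induction_on hn (fun y hy v _ => ?_) (fun a b ha hb => ?_)
    · rw [smul_smul]
      have : x * y = 0 := hM3 (by
        rw [show (3 : ℕ) = 2 + 1 from rfl, pow_succ, mul_comm x y]
        exact Ideal.mul_mem_mul hy hx)
      rw [this, zero_smul]
    · rw [smul_add, ha, hb, add_zero]
  have killJV2 : ∀ {x : A}, x ∈ M ^ 2 → ∀ {n : V}, n ∈ JVA → x • n = 0 := by
    intro x hx n hn
    refine Submodule.smul_induction_on hn (fun y hy v _ => ?_) (fun a b ha hb => ?_)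
    · rw [smul_smul]
      have : x * y = 0 := hM3 (by
        rw [show (3 : ℕ) = 2 + 1 from rfl, pow_succ]
        exact Ideal.mul_mem_mul hx hy)
      rw [this, zero_smul]
    · rw [smul_add, ha, hb, add_zero]
  -- the generator u0 of J²V
  obtain ⟨u, hune, huspan⟩ := finrank_eq_one_iff'.mp hJ2V
  set u0 : V := (u : V) with hu0def
  have hu0mem : u0 ∈ J2VA := u.2
  have hu0ne : u0 ≠ 0 := fun h => hune (Subtype.ext h)
  have huspan' : ∀ {n : V}, n ∈ J2VA → ∃ c : k, c • u0 = n := by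
    intro n hn
    obtain ⟨c, hc⟩ := huspan ⟨n, hn⟩
    exact ⟨c, congrArg Subtype.val hc⟩
  have hspanu : J2V = Submodule.span k {u0} := by
    apply le_antisymm
    · intro n hn
      obtain ⟨c, hc⟩ := huspan' hn
      exact Submodule.mem_span_singleton.mpr ⟨c, hc⟩
    · rw [Submodule.span_le, Set.singleton_subset_iff]; exact hu0mem
  -- the generator u' of J²
  obtain ⟨u'p, hu'ne0, hu'span0⟩ := finrank_eq_one_iff'.mp hJ2
  set u' : A := (u'p : A) with hu'def
  have hu'mem : u' ∈ M ^ 2 := u'p.2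
  have hu'ne : u' ≠ 0 := fun h => hu'ne0 (Subtype.ext h)
  have hu'span : ∀ {a : A}, a ∈ M ^ 2 → ∃ c : k, c • u' = a := by
    intro a ha
    obtain ⟨c, hc⟩ := hu'span0 ⟨a, ha⟩
    exact ⟨c, congrArg Subtype.val hc⟩
  -- the vector w
  have hJ2VleJV : J2V ≤ JV := fun n hn =>
    Submodule.smul_mono_left (Ideal.pow_le_self two_ne_zero) hn
  obtain ⟨w, hwJV, hwn⟩ : ∃ w, w ∈ JV ∧ w ∉ J2V := by
    by_contra h
    push_neg at h
    have heq : JV = J2V := le_antisymm (fun x hx => h x hx) hJ2VleJV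
    rw [heq, hJ2V] at hJVrank
    omega
  have hwJVA : w ∈ JVA := hwJV
  have hwne : w ≠ 0 := fun h => hwn (h ▸ J2V.zero_mem)
  -- JV = span {w, u0}
  have hwu_span : Submodule.span k ({w, u0} : Set V) = JV := by
    have hle : Submodule.span k ({w, u0} : Set V) ≤ JV := by
      rw [Submodule.span_le]
      rintro x (rfl | rfl)
      · exact hwJV
      · exact hJ2VleJV hu0mem
    have hinf : (Submodule.span k {w}) ⊓ (Submodule.span k {u0}) = ⊥ := by
      rw [eq_bot_iff]
      rintro x ⟨hx1, hx2⟩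
      obtain ⟨c, rfl⟩ := Submodule.mem_span_singleton.mp hx1
      rcases eq_or_ne c 0 with rfl | hc
      · rw [zero_smul]; exact Submodule.zero_mem ⊥
      · exfalso
        apply hwn
        rw [hspanu]
        have : w = c⁻¹ • (c • w) := by rw [smul_smul, inv_mul_cancel₀ hc, one_smul]
        rw [this]
        exact Submodule.smul_mem _ _ hx2
    have hrank2 : Module.finrank k (Submodule.span k ({w, u0} : Set V)) = 2 := by
      have hins : ({w, u0} : Set V) = insert w {u0} := rfl
      rw [hins, Submodule.span_insert]
      have h := Submodule.finrank_sup_add_finrank_inf_eq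
        (Submodule.span k {w}) (Submodule.span k {u0})
      rw [hinf, finrank_bot, finrank_span_singleton hwne, finrank_span_singleton hu0ne] at h
      omega
    exact Submodule.eq_of_le_of_finrank_le hle (by rw [hrank2, hJVrank])
  have hcoord : ∀ {n : V}, n ∈ JVA → ∃ s t : k, s • w + t • u0 = n := by
    intro n hn
    have : n ∈ Submodule.span k ({w, u0} : Set V) := by rw [hwu_span]; exact hn
    exact Submodule.mem_span_pair.mp this
  -- existence of x0 with x0 • w ≠ 0
  obtain ⟨x0, hx0M, hx0w⟩ : ∃ x0 ∈ M, x0 • w ≠ (0 : V) := by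
    by_contra h
    push_neg at h
    have hM2bot : (M ^ 2 : Ideal A) = ⊥ := by
      rw [pow_two, eq_bot_iff]
      refine Ideal.mul_le.mpr fun x hx y hy => ?_
      rw [Submodule.mem_bot]
      refine hfaith _ fun v => ?_
      obtain ⟨s, t, hst⟩ := hcoord (memJV hy v)
      rw [← smul_smul, ← hst, smul_add, smul_comm x s, smul_comm x t,
        h x hx, killJ2V hx hu0mem, smul_zero, smul_zero, add_zero]
    rw [hJ2def, hM2bot] at hJ2
    have h0 : Module.finrank k ((⊥ : Ideal A).restrictScalars k) = 0 :=
      Submodule.finrank_eq_zero.mpr (by simp)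
    omega
  obtain ⟨l0, hl0⟩ := huspan' (memJ2V hx0M hwJVA)
  have hl0ne : l0 ≠ 0 := fun h => hx0w (by rw [← hl0, h, zero_smul])
  -- existence of v0 with u' • v0 ≠ 0
  obtain ⟨v0, hv0⟩ : ∃ v0 : V, u' • v0 ≠ 0 := by
    by_contra h
    push_neg at h
    exact hu'ne (hfaith u' h)
  obtain ⟨c0, hc0⟩ := huspan' (Submodule.smul_mem_smul hu'mem (Submodule.mem_top : v0 ∈ ⊤))
  have hc0ne : c0 ≠ 0 := fun h => hv0 (by rw [← hc0, h, zero_smul])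
  -- Claim 2a
  have key0 : ∀ y ∈ M, y • w = (0 : V) → y * x0 = 0 := by
    intro y hy hyw
    obtain ⟨e, he⟩ := hu'span (by rw [pow_two]; exact Ideal.mul_mem_mul hy hx0M :
      y * x0 ∈ M ^ 2)
    obtain ⟨s, t, hst⟩ := hcoord (memJV hx0M v0)
    have h1 : (y * x0) • v0 = 0 := by
      rw [mul_smul, ← hst, smul_add, smul_comm y s, smul_comm y t,
        hyw, killJ2V hy hu0mem, smul_zero, smul_zero, add_zero]
    rw [← he, smul_assoc, ← hc0, smul_smul] at h1
    have he0 : e = 0 := by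
      rcases smul_eq_zero.mp h1 with h | h
      · exact (mul_eq_zero.mp h).resolve_right hc0ne
      · exact absurd h hu0ne
    rw [← he, he0, zero_smul]
  -- Claim 2b
  have key1 : ∀ y ∈ M, y • w = (0 : V) → ∀ v : V, ∃ t : k, y • v = t • u0 := by
    intro y hy hyw v
    obtain ⟨s, t, hst⟩ := hcoord (memJV hy v)
    have h2 : x0 • (y • v) = (s * l0) • u0 := by
      rw [← hst, smul_add, smul_comm x0 s, smul_comm x0 t, killJ2V hx0M hu0mem,
        smul_zero, add_zero, ← hl0, smul_smul]
    have h3 : x0 • (y • v) = 0 := by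
      rw [smul_smul, mul_comm, key0 y hy hyw, zero_smul]
    have hs0 : s = 0 := by
      rw [h3] at h2
      rcases smul_eq_zero.mp h2.symm with h | h
      · exact (mul_eq_zero.mp h).resolve_right hl0ne
      · exact absurd h hu0ne
    exact ⟨t, by rw [← hst, hs0, zero_smul, zero_add]⟩
  -- the kernel K of the action on w inside J
  set Wmap : A →ₗ[k] V := actOnAux w with hWmapdef
  set K : Submodule k A := J ⊓ LinearMap.ker Wmap with hKdef
  have hKJ : K ≤ J := inf_le_left
  have hx0Mem : x0 ∈ J := hx0M
  have hKrank3 : Module.finrank k K = 3 := by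
    set f : J →ₗ[k] V := Wmap.domRestrict J with hfdef
    have hker : LinearMap.ker f = K.comap J.subtype := by
      ext x
      simp only [LinearMap.mem_ker, hfdef, LinearMap.domRestrict_apply, Submodule.mem_comap,
        hKdef, Submodule.mem_inf, LinearMap.mem_ker]
      exact ⟨fun h => ⟨x.2, h⟩, fun h => h.2⟩
    have hrange : LinearMap.range f ≤ J2V := by
      rintro _ ⟨x, rfl⟩
      exact memJ2V x.2 hwJVA
    have h5 := LinearMap.finrank_range_add_finrank_ker f
    have h6 : Module.finrank k (LinearMap.range f) ≤ 1 := by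
      rw [← hJ2V]; exact Submodule.finrank_mono hrange
    have h7 : Module.finrank k (LinearMap.ker f) = Module.finrank k K := by
      rw [hker]
      exact LinearEquiv.finrank_eq (Submodule.comapSubtypeEquivOfLe hKJ)
    have hx0K : x0 ∉ K := fun h => hx0w h.2
    have hKltJ : K < J := lt_of_le_of_ne hKJ (fun h => hx0K (h ▸ hx0Mem))
    have h8 : Module.finrank k K < 4 := by
      rw [← hJrank]; exact Submodule.finrank_lt_finrank_of_lt hKltJ
    rw [h7, hJrank] at h5
    omega
  set b : Module.Basis (Fin 3) k K := Module.finBasisOfFinrankEq k K hKrank3 with hbdef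
  have hbiM : ∀ i : Fin 3, ((b i : K) : A) ∈ M := fun i => (b i).2.1
  have hbiw : ∀ i : Fin 3, ((b i : K) : A) • w = (0 : V) := fun i => (b i).2.2
  -- the subspace T
  set T : Submodule k V :=
    { carrier := {v | ∀ y ∈ M, y • w = (0 : V) → y • v = 0}
      add_mem' := fun {a b'} ha hb y hy hyw => by rw [smul_add, ha y hy hyw, hb y hy hyw, add_zero]
      zero_mem' := fun y hy hyw => smul_zero y
      smul_mem' := fun t v hv y hy hyw => by rw [smul_comm, hv y hy hyw, smul_zero] } with hTdef
  -- T has dimension at least 3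
  have hbiJ2V : ∀ i : Fin 3, ∀ v : V, ((b i : K) : A) • v ∈ J2V := by
    intro i v
    obtain ⟨t, ht⟩ := key1 _ (hbiM i) (hbiw i) v
    rw [ht]
    exact Submodule.smul_mem _ _ hu0mem
  set Ψ : V →ₗ[k] (↥J2V × (↥J2V × ↥J2V)) :=
    LinearMap.prod ((smulOpAux ((b 0 : K) : A)).codRestrict J2V (hbiJ2V 0))
      (LinearMap.prod ((smulOpAux ((b 1 : K) : A)).codRestrict J2V (hbiJ2V 1))
        ((smulOpAux ((b 2 : K) : A)).codRestrict J2V (hbiJ2V 2))) with hΨdef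
  have hkerΨT : LinearMap.ker Ψ ≤ T := by
    intro v hv
    have hvi : ∀ i : Fin 3, ((b i : K) : A) • v = 0 := by
      rw [LinearMap.mem_ker, hΨdef] at hv
      have h0 := congrArg Prod.fst hv
      have h1 := congrArg (fun p => p.2.1) hv
      have h2 := congrArg (fun p => p.2.2) hv
      intro i
      fin_cases i
      · exact congrArg Subtype.val h0
      · exact congrArg Subtype.val h1
      · exact congrArg Subtype.val h2
    intro y hy hyw
    have hyK : y ∈ K := ⟨hy, hyw⟩
    have hrep : ∃ c : Fin 3 → k, (∑ i, c i • b i) = (⟨y, hyK⟩ : K) := by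
      have := Module.Basis.mem_span b (⟨y, hyK⟩ : K)
      exact (Submodule.mem_span_range_iff_exists_fun k).mp this
    obtain ⟨c, hc⟩ := hrep
    have hyc : y = ∑ i, c i • ((b i : K) : A) := by
      have := congrArg (Subtype.val) hc
      simpa using this.symm
    rw [hyc, Finset.sum_smul]
    refine Finset.sum_eq_zero fun i _ => ?_
    rw [smul_assoc, hvi i, smul_zero]
  have hTrank : 3 ≤ Module.finrank k T := by
    have h5 := LinearMap.finrank_range_add_finrank_ker Ψ
    have h6 : Module.finrank k (LinearMap.range Ψ) ≤ 3 := by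
      have := Submodule.finrank_le (LinearMap.range Ψ)
      have hcod : Module.finrank k (↥J2V × (↥J2V × ↥J2V)) = 3 := by
        rw [Module.finrank_prod, Module.finrank_prod, hJ2V]
      omega
    have h7 := Submodule.finrank_mono hkerΨT
    rw [hdimV] at h5
    omega
  -- the square-zero operator on T
  have hXmapsT : ∀ v : V, x0 • v ∈ T := by
    intro v y hy hyw
    rw [smul_smul, key0 y hy hyw, zero_smul]
  set XT : T →ₗ[k] T := (smulOpAux x0).restrict (fun v _ => hXmapsT v) with hXTdef
  have hu'M : u' ∈ M := Ideal.pow_le_self two_ne_zero hu'mem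
  have hu'w : u' • w = (0 : V) := killJV2 hu'mem hwJVA
  have hXT2 : ∀ z : T, XT (XT z) = 0 := by
    intro z
    apply Subtype.ext
    show x0 • (x0 • (z : V)) = 0
    rw [smul_smul]
    obtain ⟨e, he⟩ := hu'span (by rw [pow_two]; exact Ideal.mul_mem_mul hx0M hx0M :
      x0 * x0 ∈ M ^ 2)
    rw [← he, smul_assoc, z.2 u' hu'M hu'w, smul_zero]
  have hrankkerXT : 2 ≤ Module.finrank k (LinearMap.ker XT) := by
    have h1 := LinearMap.finrank_range_add_finrank_ker XT
    have h2 : LinearMap.range XT ≤ LinearMap.ker XT := by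
      rintro _ ⟨z, rfl⟩
      rw [LinearMap.mem_ker]
      exact hXT2 z
    have h3 := Submodule.finrank_mono h2
    omega
  -- the socle S
  set S : Submodule k V :=
    { carrier := {v | ∀ a ∈ M, a • v = 0}
      add_mem' := fun {a b'} ha hb y hy => by rw [smul_add, ha y hy, hb y hy, add_zero]
      zero_mem' := fun y hy => smul_zero y
      smul_mem' := fun t v hv y hy => by rw [smul_comm, hv y hy, smul_zero] } with hSdef
  have hkerS : ∀ z : LinearMap.ker XT, (((z : T) : V) ∈ S) := by
    intro z a ha
    set v : V := ((z : T) : V) with hvdef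
    have hz0 : x0 • v = 0 := congrArg Subtype.val z.2
    obtain ⟨la, hla⟩ := huspan' (memJ2V ha hwJVA)
    set y : A := a - (la * l0⁻¹) • x0 with hydef
    have hyM : y ∈ M := by
      refine Submodule.sub_mem _ ha ?_
      exact (Submodule.restrictScalars_mem k M _).mp ((J).smul_mem _ hx0Mem)
    have hyw : y • w = 0 := by
      rw [hydef, sub_smul, smul_assoc, ← hl0, smul_smul, mul_assoc,
        inv_mul_cancel₀ hl0ne, mul_one, hla, sub_self]
    have hyv : y • v = 0 := (z : T).2 y hyM hyw
    have : a • v = y • v + ((la * l0⁻¹) • x0) • v := by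
      rw [hydef, sub_smul, sub_add_cancel]
    rw [this, hyv, zero_add, smul_assoc, hz0, smul_zero]
  have hSrank : 2 ≤ Module.finrank k S := by
    set g : (LinearMap.ker XT) →ₗ[k] S :=
      { toFun := fun z => ⟨((z : T) : V), hkerS z⟩
        map_add' := fun _ _ => rfl
        map_smul' := fun _ _ => rfl } with hgdef
    have hg : Function.Injective g := by
      intro z1 z2 h
      have hval := Subtype.ext_iff.mp h
      exact Subtype.ext (Subtype.ext hval)
    exact le_trans hrankkerXT (LinearMap.finrank_le_finrank_of_injective hg)
  -- Step A: embed Hom_k(V/JV, S) into End_A(V)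
  set mkQ : V →ₗ[k] V ⧸ JV := JV.mkQ with hmkQdef
  have hFbuild : ∀ f : (V ⧸ JV) →ₗ[k] S, ∀ (a : A) (v : V),
      ((f (mkQ (a • v)) : V)) = a • ((f (mkQ v) : V)) := by
    intro f a v
    obtain ⟨c, x, hx, rfl⟩ := hsplit a
    have h1 : mkQ ((algebraMap k A c + x) • v) = c • mkQ v := by
      rw [add_smul, map_add]
      have hx0 : mkQ (x • v) = 0 := by
        rw [hmkQdef, Submodule.mkQ_apply, Submodule.Quotient.mk_eq_zero]
        exact memJV hx v
      rw [hx0, add_zero, algebraMap_smul, map_smul]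
    have h2 : x • ((f (mkQ v)) : V) = 0 := (f (mkQ v)).2 x hx
    rw [h1, map_smul, add_smul, algebraMap_smul, h2, add_zero]
    rfl
  set Θ : ((V ⧸ JV) →ₗ[k] S) →ₗ[k] (V →ₗ[A] V) :=
    { toFun := fun f =>
        { toFun := fun v => ((f (mkQ v) : V))
          map_add' := fun v1 v2 => by
            show ((f (mkQ (v1 + v2)) : V)) = (f (mkQ v1) : V) + (f (mkQ v2) : V)
            rw [map_add, map_add]
            rfl
          map_smul' := fun a v => hFbuild f a v
        }
      map_add' := fun f g => by ext v; rfl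
      map_smul' := fun t f => by ext v; rfl } with hΘdef
  have hΘinj : Function.Injective Θ := by
    intro f g h
    ext q
    have hval := congrArg (fun F : V →ₗ[A] V => F q) h
    exact hval
  have fdEnd : FiniteDimensional k (V →ₗ[A] V) := by
    set g0 : (V →ₗ[A] V) →ₗ[k] (V →ₗ[k] V) :=
      { toFun := fun F => F.restrictScalars k
        map_add' := fun _ _ => rfl
        map_smul' := fun _ _ => rfl } with hg0def
    have hg0 : Function.Injective g0 := by
      intro F G h
      apply LinearMap.ext
      intro v
      exact congrArg (fun F : V →ₗ[k] V => F v) h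
    exact FiniteDimensional.of_injective g0 hg0
  have hfle : Module.finrank k ((V ⧸ JV) →ₗ[k] S) ≤ Module.finrank k (V →ₗ[A] V) :=
    LinearMap.finrank_le_finrank_of_injective hΘinj
  have hhom : Module.finrank k ((V ⧸ JV) →ₗ[k] S) = 4 * Module.finrank k S := by
    rw [Module.finrank_linearMap, hVJV]
  omega
end

section
/- Let k be an algebraically closed field and let A = k·1 ⊕ J be a local commutative k-algebra of dimension 5 with Hilbert–Samuel type (1,2,2), i.e. dim_k(J/J²) = 2, dim_k J² = 2, and J³ = 0. Let V be a faithful A-module with dim_k V = 6. Then dim_k End_A(V) ≥ 6; in particular the image of A in M_6(k) is not a maximal commutative subalgebra. -/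
set_option maxHeartbeats 1600000 in
/-- Let `k` be an algebraically closed field and `A = k·1 ⊕ J` a local commutative
`k`-algebra of dimension `5` with Hilbert–Samuel type `(1,2,2)`, i.e. `dim (J/J²) = 2`,
`dim J² = 2`, `J³ = 0`.  Let `V` be a faithful `A`-module of dimension `6`.  Then
`dim_k End_A(V) ≥ 6`; in particular the image of `A` in `M₆(k) ≅ End_k(V)` is not a
maximal commutative subalgebra. -/
theorem type_1_2_2_endomorphisms_and_not_maximal
    (k : Type*) [Field k] [IsAlgClosed k]
    (A : Type*) [CommRing A] [Algebra k A] [IsLocalRing A]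
    (hsplit : ∀ a : A, ∃ (c : k) (x : A),
      x ∈ IsLocalRing.maximalIdeal A ∧ a = algebraMap k A c + x)
    (hdimA : Module.finrank k A = 5)
    (hJJ2 : subquotientDim k ((IsLocalRing.maximalIdeal A).restrictScalars k)
      (((IsLocalRing.maximalIdeal A) ^ 2).restrictScalars k) = 2)
    (hJ2 : Module.finrank k (((IsLocalRing.maximalIdeal A) ^ 2).restrictScalars k) = 2)
    (hJ3 : (IsLocalRing.maximalIdeal A) ^ 3 = ⊥)
    (V : Type*) [AddCommGroup V] [Module A V] [Module k V]
    [IsScalarTower k A V] [SMulCommClass A k V]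
    (hfaith : ∀ a : A, (∀ v : V, a • v = 0) → a = 0)
    (hdimV : Module.finrank k V = 6) :
    6 ≤ Module.finrank k (V →ₗ[A] V) ∧
    (Algebra.lsmul k k V : A →ₐ[k] Module.End k V).range ≠
      Subalgebra.centralizer k
        ((Algebra.lsmul k k V : A →ₐ[k] Module.End k V).range : Set (Module.End k V)) := by
  classical
  set J : Ideal A := IsLocalRing.maximalIdeal A with hJdef
  haveI hfdA : FiniteDimensional k A :=
    Module.finite_of_finrank_pos (by rw [hdimA]; norm_num)
  haveI hfdV : FiniteDimensional k V :=
    Module.finite_of_finrank_pos (by rw [hdimV]; norm_num)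
  set Jres : Submodule k A := J.restrictScalars k with hJres
  set J2res : Submodule k A := (J ^ 2).restrictScalars k with hJ2res
  -- dim J = 4
  have hJ4 : Module.finrank k Jres = 4 := by
    have hsup : (Submodule.span k {(1 : A)}) ⊔ Jres = ⊤ := by
      rw [eq_top_iff]
      rintro a -
      obtain ⟨c, x, hx, rfl⟩ := hsplit a
      refine Submodule.add_mem_sup ?_ hx
      rw [Algebra.algebraMap_eq_smul_one]
      exact Submodule.smul_mem _ c (Submodule.mem_span_singleton_self 1)
    have hinf : (Submodule.span k {(1 : A)}) ⊓ Jres = ⊥ := by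
      rw [eq_bot_iff]
      rintro a ⟨h1, h2⟩
      obtain ⟨c, rfl⟩ := Submodule.mem_span_singleton.mp h1
      have hc : c = 0 := by
        by_contra hc
        have hu : IsUnit (c • (1 : A)) := by
          rw [← Algebra.algebraMap_eq_smul_one]
          exact (isUnit_iff_ne_zero.mpr hc).map (algebraMap k A)
        exact (IsLocalRing.mem_maximalIdeal _).mp h2 hu
      simp [hc]
    have := Submodule.finrank_sup_add_finrank_inf_eq (Submodule.span k {(1 : A)}) Jres
    rw [hsup, hinf, finrank_top, finrank_bot, finrank_span_singleton (one_ne_zero), hdimA]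
      at this
    omega
  -- the annihilator of J in V
  set U : Submodule k V :=
    { carrier := {v | ∀ j ∈ J, j • v = 0}
      add_mem' := fun {a b} ha hb => by
        intro j hj
        rw [smul_add, ha j hj, hb j hj, add_zero]
      zero_mem' := fun j _ => smul_zero j
      smul_mem' := fun c v hv => by
        intro j hj
        rw [smul_comm, hv j hj, smul_zero] } with hU
  have hmemU : ∀ v : V, v ∈ U ↔ ∀ j ∈ J, j • v = 0 := fun v => Iff.rfl
  -- products of two elements of J annihilate U-candidates: J² • V ⊆ U
  have hJ2U : ∀ p ∈ J ^ 2, ∀ v : V, p • v ∈ U := by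
    intro p hp v j hj
    have h3 : j * p ∈ J ^ 3 := by
      have : J ^ 3 = J * J ^ 2 := by ring
      rw [this]
      exact Ideal.mul_mem_mul hj hp
    rw [hJ3] at h3
    have h0 : j * p = 0 := Ideal.mem_bot.mp h3
    rw [smul_smul, h0, zero_smul]
  -- dim U ≥ 2
  have hUdim : 2 ≤ Module.finrank k U := by
    by_contra hlt
    have hU1 : Module.finrank k U ≤ 1 := by omega
    -- θ : V → Hom(J², U)
    set θ : V →ₗ[k] (J2res →ₗ[k] U) :=
      { toFun := fun v =>
          { toFun := fun p => ⟨(p : A) • v, hJ2U p.1 p.2 v⟩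
            map_add' := fun p q => Subtype.ext (by
              show ((p : A) + (q : A)) • v = (p : A) • v + (q : A) • v
              rw [add_smul])
            map_smul' := fun c p => Subtype.ext (by
              show (c • (p : A)) • v = c • ((p : A) • v)
              rw [smul_assoc]) }
        map_add' := fun v w => by
          ext p
          show (p : A) • (v + w) = (p : A) • v + (p : A) • w
          rw [smul_add]
        map_smul' := fun c v => by
          ext p
          show (p : A) • (c • v) = c • ((p : A) • v)
          rw [smul_comm] } with hθ
    have hker : ∀ v : V, v ∈ LinearMap.ker θ ↔ ∀ p ∈ J ^ 2, p • v = 0 := by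
      intro v
      constructor
      · intro hv p hp
        have := LinearMap.congr_fun (LinearMap.mem_ker.mp hv) ⟨p, hp⟩
        exact congrArg Subtype.val this
      · intro hv
        apply LinearMap.mem_ker.mpr
        ext p
        exact hv p.1 p.2
    set V₂ : Submodule k V := LinearMap.ker θ with hV₂
    -- dim V₂ ≥ 4
    have hV₂dim : 4 ≤ Module.finrank k V₂ := by
      rw [hV₂]
      have hrn := LinearMap.finrank_range_add_finrank_ker θ
      have hrange : Module.finrank k (LinearMap.range θ) ≤ 2 := by
        have h1 : Module.finrank k (LinearMap.range θ) ≤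
            Module.finrank k (J2res →ₗ[k] U) := Submodule.finrank_le _
        have h2 : Module.finrank k (J2res →ₗ[k] U) =
            Module.finrank k J2res * Module.finrank k U :=
          Module.finrank_linearMap k k J2res U
        rw [h2, hJ2] at h1
        omega
      rw [hdimV] at hrn
      omega
    -- μ : V₂ → Hom(J/J², U)
    set Jq := (↥Jres ⧸ (J2res.comap Jres.subtype)) with hJq
    have hJVU : ∀ v : ↥V₂, ∀ j ∈ J, j • (v : V) ∈ U := by
      intro v j hj j' hj'
      have : j' * j ∈ J ^ 2 := by
        have : J ^ 2 = J * J := sq J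
        rw [this]
        exact Ideal.mul_mem_mul hj' hj
      rw [smul_smul]
      exact (hker v.1).mp v.2 _ this
    set ν : ↥V₂ → (↥Jres →ₗ[k] U) := fun v =>
      { toFun := fun j => ⟨(j : A) • (v : V), hJVU v j.1 j.2⟩
        map_add' := fun p q => Subtype.ext (by
          show ((p : A) + (q : A)) • (v : V) = (p : A) • (v : V) + (q : A) • (v : V)
          rw [add_smul])
        map_smul' := fun c p => Subtype.ext (by
          show (c • (p : A)) • (v : V) = c • ((p : A) • (v : V))
          rw [smul_assoc]) } with hν
    have hνker : ∀ v : ↥V₂, (J2res.comap Jres.subtype) ≤ LinearMap.ker (ν v) := by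
      intro v j hj
      apply LinearMap.mem_ker.mpr
      apply Subtype.ext
      show (j : A) • (v : V) = 0
      exact (hker v.1).mp v.2 _ hj
    set μ : ↥V₂ →ₗ[k] (Jq →ₗ[k] U) :=
      { toFun := fun v => Submodule.liftQ _ (ν v) (hνker v)
        map_add' := fun v w => by
          ext j
          show (j : A) • ((v : V) + (w : V)) = (j : A) • (v : V) + (j : A) • (w : V)
          rw [smul_add]
        map_smul' := fun c v => by
          ext j
          show (j : A) • (c • (v : V)) = c • ((j : A) • (v : V))
          rw [smul_comm] } with hμ
    have hkerU : ∀ v : ↥V₂, v ∈ LinearMap.ker μ → (v : V) ∈ U := by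
      intro v hv j hj
      have h0 := LinearMap.mem_ker.mp hv
      have h1 := LinearMap.congr_fun h0 (Submodule.Quotient.mk ⟨j, hj⟩)
      exact congrArg Subtype.val h1
    have hμker : Module.finrank k (LinearMap.ker μ) ≤ 1 := by
      have hlin : ∃ f : ↥(LinearMap.ker μ) →ₗ[k] ↥U, Function.Injective f := by
        refine ⟨LinearMap.codRestrict U (V₂.subtype.comp (LinearMap.ker μ).subtype)
          (fun v => hkerU v.1 v.2), ?_⟩
        intro v w hvw
        have h' := Subtype.ext_iff.mp hvw
        change (V₂.subtype.comp (LinearMap.ker μ).subtype) v = (V₂.subtype.comp (LinearMap.ker μ).subtype) w at h'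
        exact (V₂.injective_subtype.comp (LinearMap.ker μ).injective_subtype) h'
      obtain ⟨f, hf⟩ := hlin
      calc Module.finrank k (LinearMap.ker μ) ≤ Module.finrank k U :=
            LinearMap.finrank_le_finrank_of_injective hf
        _ ≤ 1 := hU1
    have hμrange : Module.finrank k (LinearMap.range μ) ≤ 2 := by
      have h1 : Module.finrank k (LinearMap.range μ) ≤
          Module.finrank k (Jq →ₗ[k] U) := Submodule.finrank_le _
      have h2 : Module.finrank k (Jq →ₗ[k] U) =
          Module.finrank k Jq * Module.finrank k U :=
        Module.finrank_linearMap k k Jq U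
      have h3 : Module.finrank k Jq = 2 := hJJ2
      rw [h2, h3] at h1
      omega
    have hrn := LinearMap.finrank_range_add_finrank_ker μ
    omega
  -- J • V as a k-submodule
  set JT : Submodule A V := J • (⊤ : Submodule A V) with hJT
  set JVsub : Submodule k V := JT.restrictScalars k with hJVsub
  -- dim (V / JV) ≥ 2
  have hQdim : 2 ≤ Module.finrank k (V ⧸ JVsub) := by
    by_contra hlt
    have hq1 : Module.finrank k (V ⧸ JVsub) ≤ 1 := by omega
    obtain ⟨q0, hq0⟩ := finrank_le_one_iff.mp hq1
    obtain ⟨v₀, rfl⟩ := Submodule.Quotient.mk_surjective _ q0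
    -- V = A v₀
    have htop : (⊤ : Submodule A V) = Submodule.span A {v₀} := by
      have h1 : (⊤ : Submodule A V) ≤ Submodule.span A {v₀} ⊔ JT := by
        rintro v -
        obtain ⟨c, hc⟩ := hq0 (Submodule.Quotient.mk v)
        have : Submodule.Quotient.mk (c • v₀ - v) = (0 : V ⧸ JVsub) := by
          have h2 : Submodule.Quotient.mk (c • v₀ - v) =
              c • (Submodule.Quotient.mk v₀ : V ⧸ JVsub) - Submodule.Quotient.mk v := by
            rw [Submodule.Quotient.mk_sub, Submodule.Quotient.mk_smul]
          rw [h2, hc, sub_self]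
        have hmem : c • v₀ - v ∈ JT := (Submodule.Quotient.mk_eq_zero _).mp this
        have : v = c • v₀ + -(c • v₀ - v) := by abel
        rw [this]
        refine Submodule.add_mem_sup ?_ (neg_mem hmem)
        have : c • v₀ = (algebraMap k A c) • v₀ := (algebraMap_smul A c v₀).symm
        rw [this]
        exact Submodule.smul_mem _ _ (Submodule.mem_span_singleton_self v₀)
      have hNN : J • Submodule.span A {v₀} ≤ Submodule.span A {v₀} :=
        Submodule.smul_le_right
      have h2 : (⊤ : Submodule A V) ≤ Submodule.span A {v₀} ⊔ (J ^ 2) • (⊤ : Submodule A V) := by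
        calc (⊤ : Submodule A V) ≤ Submodule.span A {v₀} ⊔ JT := h1
          _ = Submodule.span A {v₀} ⊔ J • (⊤ : Submodule A V) := rfl
          _ ≤ Submodule.span A {v₀} ⊔ J • (Submodule.span A {v₀} ⊔ JT) :=
              sup_le_sup_left (Submodule.smul_mono le_rfl (le_trans le_top h1)) _
          _ = Submodule.span A {v₀} ⊔ (J • Submodule.span A {v₀} ⊔ J • JT) := by
              rw [Submodule.smul_sup]
          _ ≤ Submodule.span A {v₀} ⊔ (Submodule.span A {v₀} ⊔ J • JT) :=
              sup_le_sup_left (sup_le_sup_right hNN _) _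
          _ = Submodule.span A {v₀} ⊔ J • JT := by rw [← sup_assoc, sup_idem]
          _ = Submodule.span A {v₀} ⊔ (J ^ 2) • (⊤ : Submodule A V) := by
              rw [hJT, ← Submodule.smul_assoc, smul_eq_mul, ← sq]
      have h3 : (⊤ : Submodule A V) ≤ Submodule.span A {v₀} := by
        calc (⊤ : Submodule A V)
            ≤ Submodule.span A {v₀} ⊔ (J ^ 2) • (⊤ : Submodule A V) := h2
          _ ≤ Submodule.span A {v₀} ⊔ (J ^ 2) • (Submodule.span A {v₀} ⊔ JT) :=
              sup_le_sup_left (Submodule.smul_mono le_rfl (le_trans le_top h1)) _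
          _ = Submodule.span A {v₀} ⊔
              ((J ^ 2) • Submodule.span A {v₀} ⊔ (J ^ 2) • JT) := by
              rw [Submodule.smul_sup]
          _ ≤ Submodule.span A {v₀} ⊔
              (Submodule.span A {v₀} ⊔ (J ^ 2) • JT) :=
              sup_le_sup_left (sup_le_sup_right Submodule.smul_le_right _) _
          _ = Submodule.span A {v₀} ⊔ (J ^ 2) • JT := by rw [← sup_assoc, sup_idem]
          _ = Submodule.span A {v₀} ⊔ (J ^ 3) • (⊤ : Submodule A V) := by
              rw [hJT, ← Submodule.smul_assoc, smul_eq_mul, ← pow_succ]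
          _ = Submodule.span A {v₀} := by
              rw [hJ3]
              simp [Submodule.bot_smul]
      exact le_antisymm h3 le_top
    -- so V is cyclic, contradicting dim V = 6 > 5 = dim A
    set φ : A →ₗ[k] V :=
      { toFun := fun a => a • v₀
        map_add' := fun a b => add_smul a b v₀
        map_smul' := fun c a => smul_assoc c a v₀ } with hφ
    have hφsurj : Function.Surjective φ := by
      intro v
      have hv : v ∈ Submodule.span A {v₀} := htop ▸ Submodule.mem_top
      obtain ⟨a, ha⟩ := Submodule.mem_span_singleton.mp hv
      exact ⟨a, ha⟩
    have : Module.finrank k V ≤ Module.finrank k A := by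
      have h1 : Module.finrank k (LinearMap.range φ) ≤ Module.finrank k A :=
        LinearMap.finrank_range_le φ
      rwa [LinearMap.range_eq_top.mpr hφsurj, finrank_top] at h1
    rw [hdimA, hdimV] at this
    omega
  -- the multiplication representation ρ
  set ρ : A →ₗ[k] Module.End k V := (Algebra.lsmul k k V : A →ₐ[k] Module.End k V).toLinearMap
    with hρ
  have hρapply : ∀ (a : A) (v : V), ρ a v = a • v := fun a v => rfl
  have hρinj : Function.Injective ρ := by
    intro a b h
    have : ∀ v : V, (a - b) • v = 0 := by
      intro v
      have := LinearMap.congr_fun h v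
      rw [hρapply, hρapply] at this
      rw [sub_smul, this, sub_self]
    exact sub_eq_zero.mp (hfaith _ this)
  set P : Submodule k (Module.End k V) := LinearMap.range ρ with hP
  have hPdim : Module.finrank k P = 5 := by
    rw [hP, LinearMap.finrank_range_of_inj hρinj, hdimA]
  -- the space H of maps killing JV with image in U
  set Θ : ((V ⧸ JVsub) →ₗ[k] U) →ₗ[k] Module.End k V :=
    { toFun := fun f => U.subtype ∘ₗ f ∘ₗ JVsub.mkQ
      map_add' := fun f g => by ext v; rfl
      map_smul' := fun c f => by ext v; rfl } with hΘ
  have hΘinj : Function.Injective Θ := by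
    intro f g h
    refine LinearMap.ext fun x => ?_
    obtain ⟨v, rfl⟩ := Submodule.Quotient.mk_surjective _ x
    exact Subtype.ext (LinearMap.congr_fun h v)
  set H : Submodule k (Module.End k V) := LinearMap.range Θ with hHdef
  have hHdim : 4 ≤ Module.finrank k H := by
    rw [hHdef, LinearMap.finrank_range_of_inj hΘinj]
    have h2 : Module.finrank k ((V ⧸ JVsub) →ₗ[k] U) =
        Module.finrank k (V ⧸ JVsub) * Module.finrank k U :=
      Module.finrank_linearMap k k _ _
    rw [h2]
    calc 4 = 2 * 2 := by norm_num
      _ ≤ Module.finrank k (V ⧸ JVsub) * Module.finrank k U :=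
        Nat.mul_le_mul hQdim hUdim
  -- the socle of A
  set Soc : Submodule k A :=
    { carrier := {a | ∀ j ∈ J, a * j = 0}
      add_mem' := fun {a b} ha hb => by
        intro j hj
        rw [add_mul, ha j hj, hb j hj, add_zero]
      zero_mem' := fun j _ => zero_mul j
      smul_mem' := fun c a ha => by
        intro j hj
        rw [smul_mul_assoc, ha j hj, smul_zero] } with hSoc
  have hSocJ : Soc < Jres := by
    have hle : Soc ≤ Jres := by
      intro a ha
      by_contra hmem
      have hu : IsUnit a := by
        by_contra hnu
        exact hmem ((IsLocalRing.mem_maximalIdeal a).mpr hnu)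
      -- then J = 0, contradicting dim J = 4
      have hJbot : Jres = ⊥ := by
        rw [eq_bot_iff]
        intro j hj
        obtain ⟨u, rfl⟩ := hu
        have h0 : (u : A) * j = 0 := ha j hj
        have : j = (↑u⁻¹ : A) * ((u : A) * j) := by
          rw [← mul_assoc]
          simp
        rw [this, h0, mul_zero]
        exact Submodule.zero_mem ⊥
      rw [hJbot, finrank_bot] at hJ4
      omega
    have hne : Soc ≠ Jres := by
      intro heq
      have : J ^ 2 = ⊥ := by
        have : J * J ≤ ⊥ := Ideal.mul_le.mpr (by
          intro r hr s hs
          have hrS : r ∈ Soc := heq ▸ hr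
          exact Ideal.mem_bot.mpr (hrS s hs))
        rw [← sq] at this
        exact le_bot_iff.mp this
      rw [hJ2res, this, Submodule.restrictScalars_bot, finrank_bot] at hJ2
      omega
    exact lt_of_le_of_ne hle hne
  have hSocdim : Module.finrank k Soc ≤ 3 := by
    have := Submodule.finrank_lt_finrank_of_lt hSocJ
    omega
  -- P ⊓ H is contained in ρ(Soc)
  have hPHle : P ⊓ H ≤ Submodule.map ρ Soc := by
    rintro ψ ⟨hp, hh⟩
    obtain ⟨a, rfl⟩ := hp
    refine ⟨a, ?_, rfl⟩
    intro j hj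
    apply hfaith
    intro v
    obtain ⟨f, hf⟩ := hh
    have hjv : j • v ∈ JVsub := by
      rw [hJVsub, Submodule.restrictScalars_mem, hJT]
      exact Submodule.smul_mem_smul hj Submodule.mem_top
    have h1 : ρ a (j • v) = 0 := by
      rw [← hf]
      show (U.subtype (f (Submodule.Quotient.mk (j • v)))) = 0
      rw [(Submodule.Quotient.mk_eq_zero _).mpr hjv]
      simp
    rw [hρapply, smul_smul] at h1
    exact h1
  have hPHdim : Module.finrank k (P ⊓ H : Submodule k (Module.End k V)) ≤ 3 := by
    calc Module.finrank k (P ⊓ H : Submodule k (Module.End k V))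
        ≤ Module.finrank k (Submodule.map ρ Soc) := Submodule.finrank_mono hPHle
      _ ≤ Module.finrank k Soc := Submodule.finrank_map_le ρ Soc
      _ ≤ 3 := hSocdim
  -- the sup has dimension ≥ 6
  have hsupdim : 6 ≤ Module.finrank k (P ⊔ H : Submodule k (Module.End k V)) := by
    have := Submodule.finrank_sup_add_finrank_inf_eq P H
    omega
  -- every element of P ⊔ H is A-linear
  have hAlin : ∀ ψ : Module.End k V, ψ ∈ P ⊔ H → ∀ (a : A) (v : V), ψ (a • v) = a • ψ v := by
    intro ψ hψ a v
    obtain ⟨p, hp, h, hh, rfl⟩ := Submodule.mem_sup.mp hψ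
    obtain ⟨b, rfl⟩ := hp
    obtain ⟨f, rfl⟩ := hh
    obtain ⟨c, x, hx, rfl⟩ := hsplit a
    have hΘapply : ∀ w : V, Θ f w = (f (Submodule.Quotient.mk w) : V) := fun w => rfl
    have hΘU : ∀ w : V, (Θ f) w ∈ U := fun w => (f (Submodule.Quotient.mk w)).2
    have hΘkill : ∀ w : V, w ∈ JVsub → Θ f w = 0 := by
      intro w hw
      rw [hΘapply, (Submodule.Quotient.mk_eq_zero _).mpr hw]
      simp
    have hxv : x • v ∈ JVsub := by
      rw [hJVsub, Submodule.restrictScalars_mem, hJT]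
      exact Submodule.smul_mem_smul hx Submodule.mem_top
    have hsmul : (algebraMap k A c + x) • v = c • v + x • v := by
      rw [add_smul, algebraMap_smul]
    rw [hsmul]
    rw [LinearMap.add_apply, LinearMap.add_apply]
    rw [map_add (ρ b), map_add (Θ f)]
    rw [hΘkill _ hxv, add_zero]
    rw [map_smul (ρ b), map_smul (Θ f)]
    have hρb : ∀ w : V, ρ b w = b • w := fun w => rfl
    have h1 : ρ b (x • v) = x • ρ b v := by
      rw [hρb, hρb, smul_smul, smul_smul, mul_comm]
    rw [h1]
    have h2 : (algebraMap k A c + x) • (ρ b v + Θ f v) =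
        c • (ρ b v + Θ f v) + x • (ρ b v + Θ f v) := by
      rw [add_smul, algebraMap_smul]
    rw [h2, smul_add c, smul_add x]
    have h3 : x • Θ f v = 0 := hΘU v x hx
    rw [h3, add_zero]
    abel
  -- the restriction map from A-linear endomorphisms
  set restr : (V →ₗ[A] V) →ₗ[k] Module.End k V :=
    { toFun := fun f =>
        { toFun := fun v => f v
          map_add' := fun v w => f.map_add v w
          map_smul' := fun c v => by
            show f (c • v) = c • f v
            rw [← algebraMap_smul A c v, f.map_smul, algebraMap_smul] }
      map_add' := fun f g => by ext v; rfl
      map_smul' := fun c f => by ext v; rfl } with hrestr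
  have hrestrinj : Function.Injective restr := by
    intro f g h
    apply LinearMap.ext
    intro v
    exact LinearMap.congr_fun h v
  haveI : FiniteDimensional k (V →ₗ[A] V) := FiniteDimensional.of_injective restr hrestrinj
  have hle : P ⊔ H ≤ LinearMap.range restr := by
    intro ψ hψ
    exact ⟨{ toFun := ψ
             map_add' := ψ.map_add
             map_smul' := fun a v => hAlin ψ hψ a v },
      by ext v; rfl⟩
  have hrangedim : Module.finrank k (LinearMap.range restr) = Module.finrank k (V →ₗ[A] V) :=
    LinearMap.finrank_range_of_inj hrestrinj
  have hmain : 6 ≤ Module.finrank k (V →ₗ[A] V) := by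
    calc 6 ≤ Module.finrank k (P ⊔ H : Submodule k (Module.End k V)) := hsupdim
      _ ≤ Module.finrank k (LinearMap.range restr) := Submodule.finrank_mono hle
      _ = Module.finrank k (V →ₗ[A] V) := hrangedim
  refine ⟨hmain, ?_⟩
  -- non-maximality
  intro hEq
  have hPeq : Subalgebra.toSubmodule (Algebra.lsmul k k V : A →ₐ[k] Module.End k V).range = P := by
    ext ψ
    rw [Subalgebra.mem_toSubmodule]
    constructor
    · rintro ⟨a, rfl⟩
      exact ⟨a, rfl⟩
    · rintro ⟨a, rfl⟩
      exact ⟨a, rfl⟩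
  have hcent : LinearMap.range restr ≤
      Subalgebra.toSubmodule (Subalgebra.centralizer k
        ((Algebra.lsmul k k V : A →ₐ[k] Module.End k V).range : Set (Module.End k V))) := by
    rintro ψ ⟨f, rfl⟩
    rw [Subalgebra.mem_toSubmodule]
    rw [Subalgebra.mem_centralizer_iff]
    rintro g hg
    obtain ⟨a, rfl⟩ := hg
    ext v
    show (Algebra.lsmul k k V a) (restr f v) = restr f ((Algebra.lsmul k k V a) v)
    show a • f v = f (a • v)
    rw [f.map_smul]
  have h5 : Module.finrank k (LinearMap.range restr) ≤ 5 := by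
    calc Module.finrank k (LinearMap.range restr)
        ≤ Module.finrank k (Subalgebra.toSubmodule (Subalgebra.centralizer k
            ((Algebra.lsmul k k V : A →ₐ[k] Module.End k V).range :
              Set (Module.End k V)))) := Submodule.finrank_mono hcent
      _ = Module.finrank k P := by rw [← hEq, hPeq]
      _ = 5 := hPdim
  rw [hrangedim] at h5
  omega
end

section
/- Let k be an algebraically closed field. There is no 5-dimensional local commutative k-algebra A admitting a faithful module V with dim_k V = 6 such that the image of A in End_k(V) ≅ M_6(k) equals its own centralizer in End_k(V). -/
/-- Let `k` be an algebraically closed field.  There is no 5-dimensional local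
commutative `k`-algebra `A` admitting a faithful module `V` with `dim_k V = 6` such
that the image of `A` in `End_k(V) ≅ M₆(k)` equals its own centralizer. -/
theorem no_five_dimensional_maximal_commutative_local_algebra_in_M6
    (k : Type*) [Field k] [IsAlgClosed k]
    (A : Type*) [CommRing A] [Algebra k A] [IsLocalRing A]
    (hdimA : Module.finrank k A = 5)
    (V : Type*) [AddCommGroup V] [Module A V] [Module k V]
    [IsScalarTower k A V] [SMulCommClass A k V]
    (hfaith : ∀ a : A, (∀ v : V, a • v = 0) → a = 0)
    (hdimV : Module.finrank k V = 6)
    (hmax : (Algebra.lsmul k k V : A →ₐ[k] Module.End k V).range =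
      Subalgebra.centralizer k
        ((Algebra.lsmul k k V : A →ₐ[k] Module.End k V).range : Set (Module.End k V))) :
    False := by
  classical
  set J : Ideal A := IsLocalRing.maximalIdeal A with hJdef
  haveI : FiniteDimensional k A := FiniteDimensional.of_finrank_pos (by rw [hdimA]; norm_num)
  haveI : FiniteDimensional k V := FiniteDimensional.of_finrank_pos (by rw [hdimV]; norm_num)
  -- nilpotency of the maximal ideal
  haveI : IsArtinianRing A := isArtinian_of_tower k inferInstance
  obtain ⟨n₀, hn₀⟩ : ∃ n, J ^ n = ⊥ := by
    obtain ⟨n, hn⟩ := IsArtinianRing.isNilpotent_jacobson_bot (R := A)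
    rw [IsLocalRing.jacobson_eq_maximalIdeal ⊥ bot_ne_top] at hn
    exact ⟨n, hn⟩
  -- residue field is k
  haveI : Ideal.IsMaximal J := IsLocalRing.maximalIdeal.isMaximal A
  letI : Field (A ⧸ J) := Ideal.Quotient.field J
  haveI : FiniteDimensional k (A ⧸ J) :=
    Module.Finite.of_surjective ((J.restrictScalars k).mkQ) (Submodule.mkQ_surjective _)
  haveI : Algebra.IsIntegral k (A ⧸ J) := Algebra.IsIntegral.of_finite k _
  have hressurj : Function.Surjective (algebraMap k (A ⧸ J)) :=
    IsAlgClosed.algebraMap_bijective_of_isIntegral.2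
  have hres : ∀ a : A, ∃ c : k, a - algebraMap k A c ∈ J := by
    intro a
    obtain ⟨c, hc⟩ := hressurj (Ideal.Quotient.mk J a)
    refine ⟨c, ?_⟩
    rw [← Ideal.Quotient.eq_zero_iff_mem, map_sub, sub_eq_zero, ← hc]
    rfl
  -- J ≠ ⊥
  have hJne : J ≠ ⊥ := by
    intro h
    have hf : IsField A := IsLocalRing.isField_iff_maximalIdeal_eq.mpr h
    letI : Field A := hf.toField
    haveI : Algebra.IsIntegral k A := Algebra.IsIntegral.of_finite k A
    have hs : Function.Surjective (algebraMap k A) :=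
      IsAlgClosed.algebraMap_bijective_of_isIntegral.2
    have : Module.finrank k A ≤ 1 := by
      have hr : LinearMap.range (Algebra.linearMap k A) = ⊤ :=
        LinearMap.range_eq_top.mpr hs
      have := LinearMap.finrank_range_le (Algebra.linearMap k A)
      rw [hr, finrank_top, Module.finrank_self] at this
      exact this
    omega
  -- finrank of J is 4
  have hdimJ : Module.finrank k (J.restrictScalars k) = 4 := by
    have hbij : Function.Bijective (algebraMap k (A ⧸ J)) :=
      ⟨(algebraMap k (A ⧸ J)).injective, hressurj⟩
    have e1 : Module.finrank k (A ⧸ J) = 1 := by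
      rw [← (LinearEquiv.ofBijective (Algebra.linearMap k (A ⧸ J)) hbij).finrank_eq,
        Module.finrank_self]
    have e2 : Module.finrank k (A ⧸ J.restrictScalars k) = 1 := by
      rw [(Submodule.Quotient.restrictScalarsEquiv k J).finrank_eq, e1]
    have := Submodule.finrank_quotient_add_finrank (J.restrictScalars k)
    rw [e2, hdimA] at this
    omega
  -- the representation
  set ρ : A →ₐ[k] Module.End k V := (Algebra.lsmul k k V : A →ₐ[k] Module.End k V) with hρdef
  have hρapply : ∀ (a : A) (v : V), ρ a v = a • v := fun a v => rfl
  have hρinj : Function.Injective ρ := by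
    intro a b hab
    have : ∀ v : V, (a - b) • v = 0 := by
      intro v
      rw [sub_smul, ← hρapply, ← hρapply, hab, sub_self]
    exact sub_eq_zero.mp (hfaith _ this)
  -- the submodule J•V and the socle
  set W : Submodule A V := J • (⊤ : Submodule A V) with hWdef
  set W' : Submodule k V := W.restrictScalars k with hW'def
  have hWne : W ≠ ⊥ := by
    intro h
    apply hJne
    rw [eq_bot_iff]
    intro x hx
    have : ∀ v : V, x • v = 0 := by
      intro v
      have : x • v ∈ W := Submodule.smul_mem_smul hx Submodule.mem_top
      rw [h] at this
      simpa using this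
    simpa using hfaith x this
  set S : Submodule k V :=
    { carrier := {v | ∀ x ∈ J, x • v = 0}
      add_mem' := by
        intro a b ha hb x hx
        rw [smul_add, ha x hx, hb x hx, add_zero]
      zero_mem' := by intro x hx; simp
      smul_mem' := by
        intro c v hv x hx
        rw [smul_comm, hv x hx, smul_zero] } with hSdef
  have hSmem : ∀ v : V, v ∈ S ↔ ∀ x ∈ J, x • v = 0 := fun v => Iff.rfl
  set Q : Type _ := V ⧸ W' with hQdef
  -- every nonzero A-submodule meets the socle
  have socmem : ∀ N : Submodule A V, N ≠ ⊥ → ∃ u, u ∈ N ∧ u ≠ 0 ∧ u ∈ S := by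
    intro N hN
    have hex : ∃ n, J ^ n • N = ⊥ := ⟨n₀, by rw [hn₀, Submodule.bot_smul]⟩
    obtain ⟨m, hm, hmmin⟩ : ∃ m, J ^ m • N = ⊥ ∧ ∀ l, l < m → J ^ l • N ≠ ⊥ :=
      ⟨Nat.find hex, Nat.find_spec hex, fun l hl => Nat.find_min hex hl⟩
    have hm0 : m ≠ 0 := by
      intro h
      rw [h, pow_zero, Ideal.one_eq_top, Submodule.top_smul] at hm
      exact hN hm
    have hprev : J ^ (m - 1) • N ≠ ⊥ := hmmin (m - 1) (Nat.sub_lt (Nat.pos_of_ne_zero hm0) one_pos)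
    obtain ⟨u, hu, hune⟩ := Submodule.exists_mem_ne_zero_of_ne_bot hprev
    refine ⟨u, Submodule.smul_le_right hu, hune, ?_⟩
    intro x hx
    have hmem : x • u ∈ J • (J ^ (m - 1) • N) := Submodule.smul_mem_smul hx hu
    have heq : J • (J ^ (m - 1) • N) = J ^ m • N := by
      rw [← Submodule.smul_assoc, Ideal.smul_eq_mul, ← pow_succ',
        Nat.sub_add_cancel (Nat.pos_of_ne_zero hm0)]
    rw [heq, hm] at hmem
    simpa using hmem
  -- t ≥ 2
  have hQ2 : 2 ≤ Module.finrank k Q := by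
    by_contra hcon
    push_neg at hcon
    obtain ⟨q, hq⟩ := finrank_le_one_iff.mp (by omega : Module.finrank k Q ≤ 1)
    obtain ⟨v, rfl⟩ := W'.mkQ_surjective q
    have hbase : ∀ u : V, u ∈ Submodule.span A {v} ⊔ W := by
      intro u
      obtain ⟨c, hc⟩ := hq (W'.mkQ u)
      have h0 : u - c • v ∈ W := by
        have : W'.mkQ (u - c • v) = 0 := by
          rw [map_sub, map_smul, hc, sub_self]
        rwa [Submodule.mkQ_apply, Submodule.Quotient.mk_eq_zero,
          Submodule.restrictScalars_mem] at this
      refine Submodule.mem_sup.mpr ⟨algebraMap k A c • v, ?_, u - c • v, h0, ?_⟩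
      · exact Submodule.smul_mem _ _ (Submodule.mem_span_singleton_self v)
      · rw [algebraMap_smul]; abel
    have hind : ∀ n : ℕ, (⊤ : Submodule A V) ≤ Submodule.span A {v} ⊔ (J ^ n • ⊤) := by
      intro n
      induction n with
      | zero =>
        rw [pow_zero, Ideal.one_eq_top, Submodule.top_smul]
        exact le_sup_right
      | succ n ih =>
        refine le_trans ih (sup_le le_sup_left ?_)
        have htop : (⊤ : Submodule A V) ≤ Submodule.span A {v} ⊔ W := fun u _ => hbase u
        have h1 : (J ^ n • ⊤ : Submodule A V) ≤ J ^ n • (Submodule.span A {v} ⊔ W) :=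
          smul_mono_right _ htop
        refine le_trans h1 ?_
        rw [Submodule.smul_sup]
        refine sup_le (le_trans Submodule.smul_le_right le_sup_left) ?_
        rw [hWdef, ← Submodule.smul_assoc, Ideal.smul_eq_mul, ← pow_succ]
        exact le_sup_right
    have hsp : Submodule.span A {v} = ⊤ := by
      have := hind n₀
      rw [hn₀, Submodule.bot_smul, sup_bot_eq] at this
      exact le_antisymm le_top this
    have hsurj : Function.Surjective ((LinearMap.toSpanSingleton A V v).restrictScalars k) := by
      intro u
      have hu : u ∈ Submodule.span A ({v} : Set V) := hsp ▸ Submodule.mem_top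
      obtain ⟨a, ha⟩ := Submodule.mem_span_singleton.mp hu
      exact ⟨a, ha⟩
    have hr : LinearMap.range ((LinearMap.toSpanSingleton A V v).restrictScalars k) = ⊤ :=
      LinearMap.range_eq_top.mpr hsurj
    have hle := LinearMap.finrank_range_le ((LinearMap.toSpanSingleton A V v).restrictScalars k)
    rw [hr, finrank_top] at hle
    omega
  -- s ≥ 2
  have hS2 : 2 ≤ Module.finrank k S := by
    by_contra hcon
    push_neg at hcon
    have hVntriv : (⊤ : Submodule A V) ≠ ⊥ := by
      intro h
      haveI : Nontrivial V := Module.nontrivial_of_finrank_pos (by omega : 0 < Module.finrank k V)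
      obtain ⟨x, y, hxy⟩ := exists_pair_ne V
      apply hxy
      have hx : x ∈ (⊥ : Submodule A V) := h ▸ Submodule.mem_top
      have hy : y ∈ (⊥ : Submodule A V) := h ▸ Submodule.mem_top
      simp only [Submodule.mem_bot] at hx hy
      rw [hx, hy]
    obtain ⟨w, _, hwne, hwS⟩ := socmem ⊤ hVntriv
    have hspan : S = Submodule.span k {w} := by
      refine (Submodule.eq_of_le_of_finrank_le
        ((Submodule.span_singleton_le_iff_mem w S).mpr hwS) ?_).symm
      rw [finrank_span_singleton hwne]
      omega
    obtain ⟨φ, hφ⟩ : ∃ φ : Module.Dual k V, φ w ≠ 0 := by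
      by_contra hc
      push_neg at hc
      exact hwne ((Module.forall_dual_apply_eq_zero_iff k w).mp hc)
    set Φ : V →ₗ[k] Module.Dual k A :=
      { toFun := fun v => φ ∘ₗ ((LinearMap.toSpanSingleton A V v).restrictScalars k)
        map_add' := by
          intro v w'
          ext a
          simp [smul_add]
        map_smul' := by
          intro c v
          ext a
          simp [smul_comm a c v] } with hΦdef
    have hΦapply : ∀ (v : V) (a : A), Φ v a = φ (a • v) := fun v a => rfl
    have hΦinj : Function.Injective Φ := by
      rw [injective_iff_map_eq_zero]
      intro v hv
      by_contra hvne
      have hNne : Submodule.span A ({v} : Set V) ≠ ⊥ := by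
        intro h
        exact hvne (by simpa [h] using Submodule.mem_span_singleton_self (R := A) v)
      obtain ⟨u, huN, hune, huS⟩ := socmem _ hNne
      obtain ⟨a, ha⟩ := Submodule.mem_span_singleton.mp huN
      rw [hspan] at huS
      obtain ⟨c, hc⟩ := Submodule.mem_span_singleton.mp huS
      have hcne : c ≠ 0 := by
        intro h
        rw [h, zero_smul] at hc
        exact hune hc.symm
      have : Φ v a = c * φ w := by
        rw [hΦapply, ha, ← hc, map_smul, smul_eq_mul]
      rw [hv] at this
      simp only [LinearMap.zero_apply] at this
      exact hφ (by
        field_simp at this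
        rcases mul_eq_zero.mp this.symm with h | h
        · exact absurd h hcne
        · exact h)
    have := LinearMap.finrank_le_finrank_of_injective hΦinj
    rw [hdimV, Subspace.dual_finrank_eq, hdimA] at this
    omega
  -- the map Hom(Q, S) → End V
  set Γ : (Q →ₗ[k] S) →ₗ[k] Module.End k V :=
    { toFun := fun f => S.subtype ∘ₗ f ∘ₗ W'.mkQ
      map_add' := by intro f g; ext v; simp
      map_smul' := by intro c f; ext v; simp } with hΓdef
  have hΓapply : ∀ (f : Q →ₗ[k] S) (v : V), Γ f v = (f (W'.mkQ v) : V) := fun f v => rfl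
  have hΓinj : Function.Injective Γ := by
    rw [injective_iff_map_eq_zero]
    intro f hf
    refine LinearMap.ext fun q => ?_
    obtain ⟨v, rfl⟩ := W'.mkQ_surjective q
    have : Γ f v = 0 := by rw [hf]; rfl
    rw [hΓapply] at this
    exact Subtype.ext (by simpa using this)
  -- each Γ f is multiplication by an element of J annihilating J
  have hcent : ∀ f : Q →ₗ[k] S, ∃ a : A, ρ a = Γ f ∧ a ∈ J ∧ ∀ y ∈ J, a * y = 0 := by
    intro f
    have hWzero : ∀ (j : A), j ∈ J → ∀ v : V, Γ f (j • v) = 0 := by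
      intro j hj v
      rw [hΓapply]
      have : W'.mkQ (j • v) = 0 := by
        rw [Submodule.mkQ_apply, Submodule.Quotient.mk_eq_zero, Submodule.restrictScalars_mem]
        exact Submodule.smul_mem_smul hj Submodule.mem_top
      rw [this, map_zero, Submodule.coe_zero]
    have hAlin : ∀ (a : A) (v : V), Γ f (a • v) = a • Γ f v := by
      intro a v
      obtain ⟨c, hc⟩ := hres a
      have hdec : a = algebraMap k A c + (a - algebraMap k A c) := by ring
      rw [hdec, add_smul, add_smul, map_add, hWzero _ hc, algebraMap_smul, map_smul, add_zero]
      rw [algebraMap_smul]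
      have hSv : Γ f v ∈ S := (f (W'.mkQ v)).2
      rw [(hSmem _).mp hSv _ hc, add_zero]
    have hmem : Γ f ∈ ρ.range := by
      rw [hmax]
      rw [Subalgebra.mem_centralizer_iff]
      rintro g ⟨a, rfl⟩
      ext v
      simp only [Module.End.mul_apply]
      exact (hAlin a v).symm
    obtain ⟨a, ha0⟩ := hmem
    have ha : ρ a = Γ f := ha0
    refine ⟨a, ha, ?_, ?_⟩
    · by_contra hcon
      have hu : IsUnit a := by
        rw [hJdef] at hcon
        exact not_not.mp (fun h => hcon (IsLocalRing.mem_maximalIdeal a |>.mpr h))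
      obtain ⟨w0, hw0, hw0ne⟩ := Submodule.exists_mem_ne_zero_of_ne_bot hWne
      apply hw0ne
      obtain ⟨b, hb⟩ : ∃ b : A, b * a = 1 := ⟨↑hu.unit⁻¹, hu.unit.inv_mul⟩
      -- w0 ∈ W so Γ f w0 = 0, but Γ f = ρ a
      have hΓw0 : a • w0 = 0 := by
        rw [← hρapply, ha, hΓapply]
        have : W'.mkQ w0 = 0 := by
          rwa [Submodule.mkQ_apply, Submodule.Quotient.mk_eq_zero, Submodule.restrictScalars_mem]
        rw [this, map_zero, Submodule.coe_zero]
      calc w0 = (b * a) • w0 := by rw [hb, one_smul]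
      _ = b • (a • w0) := mul_smul b a w0
      _ = 0 := by rw [hΓw0, smul_zero]
    · intro y hy
      apply hfaith
      intro v
      rw [mul_smul, ← hρapply, ha, hWzero y hy]
  -- the subspace of elements of J annihilating J
  set T : Submodule k A :=
    (J.restrictScalars k) ⊓
      { carrier := {a | ∀ y ∈ J, a * y = 0}
        add_mem' := by intro a b ha hb y hy; rw [add_mul, ha y hy, hb y hy, add_zero]
        zero_mem' := by intro y hy; simp
        smul_mem' := by intro c a ha y hy; rw [smul_mul_assoc, ha y hy, smul_zero] } with hTdef
  have hrange : LinearMap.range Γ ≤ T.map (ρ.toLinearMap : A →ₗ[k] Module.End k V) := by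
    rintro g ⟨f, rfl⟩
    obtain ⟨a, ha, haJ, hann⟩ := hcent f
    exact ⟨a, ⟨by simpa using haJ, hann⟩, ha⟩
  have hts : Module.finrank k Q * Module.finrank k S ≤ 4 := by
    have h1 : Module.finrank k (Q →ₗ[k] S) =
        Module.finrank k Q * Module.finrank k S :=
      Module.finrank_linearMap (R := k) (S := k) (M := Q) (N := S)
    have h2 := LinearMap.finrank_range_of_inj hΓinj
    have h3 := Submodule.finrank_mono hrange
    have h4 : Module.finrank k (T.map (ρ.toLinearMap : A →ₗ[k] Module.End k V)) ≤
        Module.finrank k T := Submodule.finrank_map_le _ _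
    have h5 : Module.finrank k T ≤ Module.finrank k (J.restrictScalars k) :=
      Submodule.finrank_mono inf_le_left
    rw [hdimJ] at h5
    omega
  have hmul1 : Module.finrank k Q * 2 ≤ Module.finrank k Q * Module.finrank k S :=
    Nat.mul_le_mul_left _ hS2
  have hmul2 : 2 * Module.finrank k S ≤ Module.finrank k Q * Module.finrank k S :=
    Nat.mul_le_mul_right _ hQ2
  have ht2 : Module.finrank k Q = 2 := by omega
  have hs2 : Module.finrank k S = 2 := by omega
  -- T = J, hence J * J = 0
  have hTeq : T = J.restrictScalars k := by
    have hle : T ≤ J.restrictScalars k := inf_le_left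
    apply Submodule.eq_of_le_of_finrank_le hle
    rw [hdimJ]
    have h1 : Module.finrank k (Q →ₗ[k] S) =
        Module.finrank k Q * Module.finrank k S :=
      Module.finrank_linearMap (R := k) (S := k) (M := Q) (N := S)
    have h2 := LinearMap.finrank_range_of_inj hΓinj
    have h3 := Submodule.finrank_mono hrange
    have h4 : Module.finrank k (T.map (ρ.toLinearMap : A →ₗ[k] Module.End k V)) ≤
        Module.finrank k T := Submodule.finrank_map_le _ _
    rw [ht2, hs2] at h1
    omega
  have hJJ : ∀ x ∈ J, ∀ y ∈ J, x * y = 0 := by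
    intro x hx
    have : x ∈ T := hTeq.symm ▸ (by simpa using hx : x ∈ J.restrictScalars k)
    exact this.2
  -- hence W ⊆ S, contradiction with dimensions
  have hWS : W' ≤ S := by
    intro v hv x hx
    have hJW : J • W = ⊥ := by
      have hJJ' : J * J = ⊥ := by
        rw [eq_bot_iff]
        refine Ideal.mul_le.mpr ?_
        intro r hr s hs
        rw [hJJ r hr s hs]
        exact Submodule.zero_mem ⊥
      rw [hWdef, ← Submodule.smul_assoc, Ideal.smul_eq_mul, hJJ', Submodule.bot_smul]
    have : x • v ∈ J • W := Submodule.smul_mem_smul hx hv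
    rw [hJW] at this
    simpa using this
  have hdimW : Module.finrank k W' = 4 := by
    have := Submodule.finrank_quotient_add_finrank W'
    rw [hdimV] at this
    have hq : Module.finrank k (V ⧸ W') = 2 := ht2
    omega
  have := Submodule.finrank_mono hWS
  rw [hdimW, hs2] at this
  omega
end
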